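/- arXiv:math/0404067 — 4 statements merged into one kernel-verified Lean document; each statement's English description precedes it below -/
import Mathlib

section
/- Symmetry of gluing conditions. Let ν ∈ ℂ and let f ∈ F_η. Then the following two conditions are equivalent: (1) the function z ↦ f(z) - z^{-2ν-1} η(S) f(-1/z), defined and holomorphic on ℂ∖ℝ, extends to a holomorphic function on ℂ∖(-∞,0]; (2) there exist an open neighborhood U of ℝ∖{0} in ℂ and a holomorphic function q : U → V such that (1+z^{-2})^{ν+1/2} f(-1/z) - (1+z²)^{ν+1/2} η(S) f(z) = q(z) for all z ∈ U∖ℝ (i.e. the two functions z ↦ (1+z^{-2})^{ν+1/2} f(-1/z) and z ↦ (1+z²)^{ν+1/2} η(S) f(z) define the same hyperfunction on ℝ∖{0}). -/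
open Complex Filter Topology MeasureTheory Set

noncomputable section

abbrev SL2Z := Matrix.SpecialLinearGroup (Fin 2) ℤ

def Smat : SL2Z := ⟨!![0, 1; -1, 0], by decide⟩
def Tmat : SL2Z := ⟨!![1, 1; 0, 1], by decide⟩
def negI : SL2Z := ⟨!![-1, 0; 0, -1], by decide⟩

variable {V : Type} [NormedAddCommGroup V] [NormedSpace ℂ V]

/-- The space `F_η`. -/
structure MemFeta (η : SL2Z →* (V →ₗ[ℂ] V)ˣ) (f : ℂ → V) : Prop where
  holo : DifferentiableOn ℂ f {z : ℂ | z.im ≠ 0}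
  periodic : ∀ z : ℂ, z.im ≠ 0 → f (z + 1) = (η Tmat : V →ₗ[ℂ] V) (f z)
  bounded : ∃ C : ℝ, ∀ z : ℂ, 1 ≤ |z.im| → ‖f z‖ ≤ C
  limits : ∃ a b : V, Tendsto (fun t : ℝ => f ((t : ℂ) * I)) atTop (𝓝 a) ∧
    Tendsto (fun t : ℝ => f (-((t : ℂ) * I))) atTop (𝓝 b) ∧ a + b = 0

lemma glue_ne_zero {z : ℂ} (hz : z.re ≠ 0) : z ≠ 0 := fun h => hz (by simp [h])

lemma glue_sq_mem {z : ℂ} (hz : z.re ≠ 0) : 1 + z ^ 2 ∈ slitPlane := by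
  rcases eq_or_ne z.im 0 with h | h
  · refine Or.inl ?_
    have : (1 + z ^ 2).re = 1 + z.re * z.re := by
      simp [pow_two, Complex.add_re, Complex.mul_re, h]
    rw [this]; nlinarith [sq_nonneg z.re]
  · refine Or.inr ?_
    have : (1 + z ^ 2).im = 2 * z.re * z.im := by
      simp [pow_two, Complex.add_im, Complex.mul_im]; ring
    rw [this]
    exact mul_ne_zero (mul_ne_zero two_ne_zero hz) h

lemma glue_invsq_mem {z : ℂ} (hz : z.re ≠ 0) : 1 + (z ^ 2)⁻¹ ∈ slitPlane := by
  have hz0 : z ≠ 0 := glue_ne_zero hz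
  have hns : 0 < Complex.normSq (z ^ 2) := Complex.normSq_pos.2 (pow_ne_zero 2 hz0)
  rcases eq_or_ne z.im 0 with h | h
  · refine Or.inl ?_
    have h1 : ((z ^ 2)⁻¹).re = (z ^ 2).re / Complex.normSq (z ^ 2) := Complex.inv_re _
    have hre : (z ^ 2).re = z.re * z.re := by simp [pow_two, Complex.mul_re, h]
    have hpos : 0 < ((z ^ 2)⁻¹).re := by
      rw [h1, hre]; exact div_pos (mul_self_pos.2 hz) hns
    simp only [Complex.add_re, Complex.one_re]
    linarith
  · refine Or.inr ?_
    have h1 : ((z ^ 2)⁻¹).im = -(z ^ 2).im / Complex.normSq (z ^ 2) := Complex.inv_im _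
    have him : (z ^ 2).im = 2 * z.re * z.im := by
      simp [pow_two, Complex.mul_im]; ring
    simp only [Complex.add_im, Complex.one_im, zero_add, h1, him]
    intro hc
    rw [div_eq_zero_iff] at hc
    rcases hc with hc | hc
    · exact (mul_ne_zero (mul_ne_zero two_ne_zero hz) h) (by linarith)
    · exact hns.ne' hc

lemma glue_logA {z : ℂ} (hz : 0 < z.re) :
    Complex.log (1 + (z ^ 2)⁻¹) = Complex.log (1 + z ^ 2) - 2 * Complex.log z := by
  have hz0 : z ≠ 0 := fun h => by simp [h] at hz
  have hsq : 1 + z ^ 2 ∈ slitPlane := glue_sq_mem hz.ne'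
  have hsq0 : 1 + z ^ 2 ≠ 0 := slitPlane_ne_zero hsq
  have hexp : Complex.exp (Complex.log (1 + z ^ 2) - 2 * Complex.log z) = 1 + (z ^ 2)⁻¹ := by
    rw [Complex.exp_sub, Complex.exp_log hsq0, show (2 : ℂ) * Complex.log z
        = Complex.log z + Complex.log z by ring, Complex.exp_add, Complex.exp_log hz0]
    field_simp [pow_two]; ring
  have hB : |Complex.arg z| < Real.pi / 2 := Complex.abs_arg_lt_pi_div_two_iff.2 (Or.inl hz)
  have him : (Complex.log (1 + z ^ 2) - 2 * Complex.log z).im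
      = Complex.arg (1 + z ^ 2) - 2 * Complex.arg z := by
    simp [Complex.sub_im, Complex.mul_im, Complex.log_im]
  have hbound : -Real.pi < Complex.arg (1 + z ^ 2) - 2 * Complex.arg z ∧
      Complex.arg (1 + z ^ 2) - 2 * Complex.arg z ≤ Real.pi := by
    have hApi : -Real.pi < Complex.arg (1 + z ^ 2) := Complex.neg_pi_lt_arg _
    rcases lt_trichotomy z.im 0 with h | h | h
    · have hBneg : Complex.arg z < 0 := Complex.arg_neg_iff.2 h
      have hAneg : Complex.arg (1 + z ^ 2) < 0 := by
        apply Complex.arg_neg_iff.2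
        have : (1 + z ^ 2).im = 2 * z.re * z.im := by
          simp [pow_two, Complex.add_im, Complex.mul_im]; ring
        rw [this]; nlinarith
      constructor
      · nlinarith [abs_lt.1 hB]
      · nlinarith [abs_lt.1 hB]
    · have hBz : Complex.arg z = 0 := Complex.arg_eq_zero_iff.2 ⟨hz.le, h⟩
      have hAz : Complex.arg (1 + z ^ 2) = 0 := by
        apply Complex.arg_eq_zero_iff.2
        constructor
        · have : (1 + z ^ 2).re = 1 + z.re * z.re := by
            simp [pow_two, Complex.add_re, Complex.mul_re, h]
          rw [this]; nlinarith
        · simp [pow_two, Complex.add_im, Complex.mul_im, h]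
      rw [hBz, hAz]
      constructor
      · simpa using Real.pi_pos
      · simpa using Real.pi_pos.le
    · have hBpos : 0 ≤ Complex.arg z := Complex.arg_nonneg_iff.2 h.le
      have hApos : 0 < Complex.arg (1 + z ^ 2) := by
        have him2 : 0 < (1 + z ^ 2).im := by
          have : (1 + z ^ 2).im = 2 * z.re * z.im := by
            simp [pow_two, Complex.add_im, Complex.mul_im]; ring
          rw [this]; nlinarith
        have := Complex.arg_nonneg_iff.2 him2.le
        rcases this.lt_or_eq with h' | h'
        · exact h'
        · exfalso
          have := (Complex.arg_eq_zero_iff.1 h'.symm).2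
          linarith
      have hAlt : Complex.arg (1 + z ^ 2) < Real.pi := by
        apply lt_of_le_of_ne (Complex.arg_le_pi _)
        intro hc
        have := Complex.arg_eq_pi_iff.1 hc
        have him2 : 0 < (1 + z ^ 2).im := by
          have : (1 + z ^ 2).im = 2 * z.re * z.im := by
            simp [pow_two, Complex.add_im, Complex.mul_im]; ring
          rw [this]; nlinarith
        linarith [this.2, him2]
      constructor
      · nlinarith [abs_lt.1 hB]
      · nlinarith [abs_lt.1 hB]
  rw [← hexp, Complex.log_exp (by rw [him]; exact hbound.1) (by rw [him]; exact hbound.2)]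

lemma glue_cpow_ne_zero {x : ℂ} (hx : x ≠ 0) (y : ℂ) : x ^ y ≠ 0 := by
  rw [Complex.cpow_def_of_ne_zero hx]; exact Complex.exp_ne_zero _

lemma glue_logB {z : ℂ} (hz : z.re < 0) :
    Complex.log (1 + (z ^ 2)⁻¹) = Complex.log (1 + z ^ 2) - 2 * Complex.log (-z) := by
  have := glue_logA (z := -z) (by simp [Complex.neg_re]; linarith)
  simpa [neg_sq] using this

lemma glue_key1 {z : ℂ} (hz : 0 < z.re) (ν : ℂ) :
    (1 + (z ^ 2)⁻¹) ^ (ν + 1 / 2) = (1 + z ^ 2) ^ (ν + 1 / 2) * z ^ (-2 * ν - 1) := by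
  have hz0 : z ≠ 0 := fun h => by simp [h] at hz
  have h1 : (1 : ℂ) + (z ^ 2)⁻¹ ≠ 0 := slitPlane_ne_zero (glue_invsq_mem hz.ne')
  have h2 : (1 : ℂ) + z ^ 2 ≠ 0 := slitPlane_ne_zero (glue_sq_mem hz.ne')
  rw [Complex.cpow_def_of_ne_zero h1, Complex.cpow_def_of_ne_zero h2,
    Complex.cpow_def_of_ne_zero hz0, ← Complex.exp_add]
  congr 1
  rw [glue_logA hz]; ring

lemma glue_arg_ne {z : ℂ} (hz : 0 < z.re) : Complex.arg z ≠ Real.pi := by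
  have hB := Complex.abs_arg_lt_pi_div_two_iff.2 (Or.inl hz)
  intro hc
  rw [hc] at hB
  have := abs_lt.1 hB
  nlinarith [Real.pi_pos]

lemma glue_key2 {z : ℂ} (hz : z.re < 0) (ν : ℂ) :
    (1 + (z ^ 2)⁻¹) ^ (ν + 1 / 2) * (-z⁻¹) ^ (-2 * ν - 1) = (1 + z ^ 2) ^ (ν + 1 / 2) := by
  have hz0 : z ≠ 0 := fun h => by simp [h] at hz
  have hnz : (-z).re > 0 := by simp [Complex.neg_re]; linarith
  have h1 : (1 : ℂ) + (z ^ 2)⁻¹ ≠ 0 := slitPlane_ne_zero (glue_invsq_mem hz.ne)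
  have h2 : (1 : ℂ) + z ^ 2 ≠ 0 := slitPlane_ne_zero (glue_sq_mem hz.ne)
  have h3 : -z⁻¹ ≠ 0 := by simp [hz0]
  have hloginv : Complex.log (-z⁻¹) = -Complex.log (-z) := by
    rw [show -z⁻¹ = (-z)⁻¹ by rw [inv_neg], Complex.log_inv _ (glue_arg_ne hnz)]
  rw [Complex.cpow_def_of_ne_zero h1, Complex.cpow_def_of_ne_zero h2,
    Complex.cpow_def_of_ne_zero h3, ← Complex.exp_add]
  congr 1
  rw [glue_logB hz, hloginv]; ring

lemma glue_key3 {z : ℂ} (hz : 0 < z.re) (ν : ℂ) :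
    z ^ (-2 * ν - 1) * (1 + (z ^ 2)⁻¹) ^ (-(ν + 1 / 2)) * (1 + z ^ 2) ^ (ν + 1 / 2) = 1 := by
  have hz0 : z ≠ 0 := fun h => by simp [h] at hz
  have h1 : (1 : ℂ) + (z ^ 2)⁻¹ ≠ 0 := slitPlane_ne_zero (glue_invsq_mem hz.ne')
  have h2 : (1 : ℂ) + z ^ 2 ≠ 0 := slitPlane_ne_zero (glue_sq_mem hz.ne')
  rw [Complex.cpow_def_of_ne_zero h1, Complex.cpow_def_of_ne_zero h2,
    Complex.cpow_def_of_ne_zero hz0, ← Complex.exp_add, ← Complex.exp_add]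
  have h0 : Complex.log z * (-2 * ν - 1) + Complex.log (1 + (z ^ 2)⁻¹) * (-(ν + 1 / 2))
      + Complex.log (1 + z ^ 2) * (ν + 1 / 2) = 0 := by
    rw [glue_logA hz]; ring
  rw [h0, Complex.exp_zero]

lemma Smat_mul_Smat : Smat * Smat = negI := by
  ext i j
  rw [Matrix.SpecialLinearGroup.coe_mul]
  fin_cases i <;> fin_cases j <;>
    simp [Smat, negI, Matrix.SpecialLinearGroup.coe_mul, Matrix.mul_apply, Fin.sum_univ_succ]

/-- **Symmetry of gluing conditions** (Proposition 2.1 of the paper): for `f ∈ F_η`,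
the function `z ↦ f(z) - z^{-2ν-1} η(S) f(-1/z)` extends holomorphically to the slit
plane `ℂ ∖ (-∞,0]` if and only if `(1+z^{-2})^{ν+1/2} f(-1/z)` and
`(1+z²)^{ν+1/2} η(S) f(z)` define the same hyperfunction on `ℝ ∖ {0}`. -/
theorem gluing_symmetry [FiniteDimensional ℂ V] [Nontrivial V]
    (η : SL2Z →* (V →ₗ[ℂ] V)ˣ) (hη1 : η negI = 1) (hηfin : (Set.range η).Finite)
    (ν : ℂ) (f : ℂ → V) (hf : MemFeta η f) :
    (∃ g : ℂ → V, DifferentiableOn ℂ g Complex.slitPlane ∧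
      ∀ z : ℂ, z.im ≠ 0 →
        g z = f z - (z ^ (-2 * ν - 1)) • (η Smat : V →ₗ[ℂ] V) (f (-z⁻¹))) ↔
    (∃ U : Set ℂ, IsOpen U ∧ {z : ℂ | z.im = 0 ∧ z ≠ 0} ⊆ U ∧
      ∃ q : ℂ → V, DifferentiableOn ℂ q U ∧
        ∀ z ∈ U, z.im ≠ 0 →
          ((1 + (z ^ 2)⁻¹) ^ (ν + 1 / 2)) • f (-z⁻¹)
            - ((1 + z ^ 2) ^ (ν + 1 / 2)) • (η Smat : V →ₗ[ℂ] V) (f z) = q z) := by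
  set S : V →ₗ[ℂ] V := (η Smat : V →ₗ[ℂ] V) with hSdef
  have hSS : ∀ v : V, S (S v) = v := by
    intro v
    have h1 : η Smat * η Smat = 1 := by rw [← map_mul, Smat_mul_Smat, hη1]
    have h2 : (S * S : V →ₗ[ℂ] V) = 1 := by
      have := congrArg Units.val h1
      rwa [Units.val_mul] at this
    calc S (S v) = (S * S : V →ₗ[ℂ] V) v := rfl
    _ = v := by rw [h2]; rfl
  set Sc : V →L[ℂ] V := LinearMap.toContinuousLinearMap S with hScdef
  have hScoe : ∀ v : V, Sc v = S v := fun v => rfl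
  have hopim : IsOpen {w : ℂ | w.im ≠ 0} := isOpen_ne_fun Complex.continuous_im continuous_const
  have hinv_re : ∀ z : ℂ, z.re < 0 → 0 < (-z⁻¹).re := by
    intro z hz
    have hz0 : z ≠ 0 := glue_ne_zero hz.ne
    have : (-z⁻¹).re = -z.re / Complex.normSq z := by
      rw [Complex.neg_re, Complex.inv_re, neg_div]
    rw [this]
    exact div_pos (by linarith) (Complex.normSq_pos.2 hz0)
  have hinv_im : ∀ z : ℂ, z.im ≠ 0 → (-z⁻¹).im ≠ 0 := by
    intro z hz
    have hz0 : z ≠ 0 := fun h => hz (by simp [h])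
    have : (-z⁻¹).im = z.im / Complex.normSq z := by
      rw [Complex.neg_im, Complex.inv_im, neg_div, neg_neg]
    rw [this]
    exact div_ne_zero hz ((Complex.normSq_pos.2 hz0).ne')
  constructor
  · rintro ⟨g, hg, hgeq⟩
    refine ⟨{z : ℂ | z.re ≠ 0}, isOpen_ne_fun Complex.continuous_re continuous_const,
      fun z hz => fun h => hz.2 (Complex.ext h hz.1),
      fun z => if 0 < z.re then -(((1 + z ^ 2) ^ (ν + 1 / 2)) • S (g z))
        else ((1 + (z ^ 2)⁻¹) ^ (ν + 1 / 2)) • g (-z⁻¹), ?_, ?_⟩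
    · -- differentiability of q
      intro z hz
      rcases lt_or_gt_of_ne (Ne.symm hz) with hzpos | hzneg
      · -- 0 < z.re
        have hmem : {w : ℂ | 0 < w.re} ∈ 𝓝 z :=
          (isOpen_lt continuous_const Complex.continuous_re).mem_nhds hzpos
        have heq : (fun w => if 0 < w.re then -(((1 + w ^ 2) ^ (ν + 1 / 2)) • S (g w))
            else ((1 + (w ^ 2)⁻¹) ^ (ν + 1 / 2)) • g (-w⁻¹)) =ᶠ[𝓝 z]
            (fun w => -(((1 + w ^ 2) ^ (ν + 1 / 2)) • Sc (g w))) := by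
          filter_upwards [hmem] with w hw
          rw [if_pos hw, hScoe]
        have hgz : DifferentiableAt ℂ g z :=
          hg.differentiableAt (isOpen_slitPlane.mem_nhds (Or.inl hzpos))
        have hcp : DifferentiableAt ℂ (fun w : ℂ => (1 + w ^ 2) ^ (ν + 1 / 2)) z :=
          DifferentiableAt.cpow ((differentiableAt_id.pow 2).const_add 1)
            (differentiableAt_const _) (glue_sq_mem hzpos.ne')
        have hSg : DifferentiableAt ℂ (fun w => Sc (g w)) z :=
          (Sc.differentiable.differentiableAt).comp z hgz
        exact ((hcp.smul hSg).neg.congr_of_eventuallyEq heq).differentiableWithinAt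
      · -- z.re < 0
        have hzneg' : z.re < 0 := hzneg
        have hz0 : z ≠ 0 := glue_ne_zero hz
        have hmem : {w : ℂ | w.re < 0} ∈ 𝓝 z :=
          (isOpen_lt Complex.continuous_re continuous_const).mem_nhds hzneg'
        have heq : (fun w => if 0 < w.re then -(((1 + w ^ 2) ^ (ν + 1 / 2)) • S (g w))
            else ((1 + (w ^ 2)⁻¹) ^ (ν + 1 / 2)) • g (-w⁻¹)) =ᶠ[𝓝 z]
            (fun w => ((1 + (w ^ 2)⁻¹) ^ (ν + 1 / 2)) • g (-w⁻¹)) := by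
          filter_upwards [hmem] with w hw
          rw [if_neg (by intro h; exact absurd hw (not_lt.2 h.le))]
        have hcp : DifferentiableAt ℂ (fun w : ℂ => (1 + (w ^ 2)⁻¹) ^ (ν + 1 / 2)) z :=
          DifferentiableAt.cpow (((differentiableAt_id.pow 2).inv
            (pow_ne_zero 2 hz0)).const_add 1) (differentiableAt_const _) (glue_invsq_mem hz)
        have hinner : DifferentiableAt ℂ (fun w : ℂ => -w⁻¹) z :=
          (differentiableAt_id.inv hz0).neg
        have hgat : DifferentiableAt ℂ g (-z⁻¹) :=
          hg.differentiableAt (isOpen_slitPlane.mem_nhds (Or.inl (hinv_re z hzneg')))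
        have hcomp : DifferentiableAt ℂ (fun w : ℂ => g (-w⁻¹)) z := by
          have := hgat.comp z hinner
          simpa [Function.comp_def] using this
        exact ((hcp.smul hcomp).congr_of_eventuallyEq heq).differentiableWithinAt
    · -- equality
      intro z hzU hzim
      rcases lt_or_gt_of_ne (Ne.symm hzU) with hzpos | hzneg
      · dsimp only
        rw [if_pos hzpos, hgeq z hzim, map_sub, LinearMap.map_smul, hSS, glue_key1 hzpos ν]
        module
      · have hzneg' : z.re < 0 := hzneg
        have hz0 : z ≠ 0 := glue_ne_zero hzU
        have him' : (-z⁻¹).im ≠ 0 := hinv_im z hzim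
        dsimp only
        rw [if_neg (by intro h; exact absurd hzneg' (not_lt.2 h.le)), hgeq _ him',
          show -(-z⁻¹)⁻¹ = z by simp [inv_neg], smul_sub, smul_smul, glue_key2 hzneg' ν]
  · rintro ⟨U, hUo, hUsub, q, hq, hqeq⟩
    refine ⟨fun z => if z.im ≠ 0 then f z - (z ^ (-2 * ν - 1)) • S (f (-z⁻¹))
      else -((z ^ (-2 * ν - 1) * (1 + (z ^ 2)⁻¹) ^ (-(ν + 1 / 2))) • S (q z)), ?_,
      fun z hz => if_pos hz⟩
    have hkey : ∀ z ∈ U, 0 < z.re → z.im ≠ 0 →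
        f z - (z ^ (-2 * ν - 1)) • S (f (-z⁻¹))
          = -((z ^ (-2 * ν - 1) * (1 + (z ^ 2)⁻¹) ^ (-(ν + 1 / 2))) • S (q z)) := by
      intro z hzU hzpos hzim
      have h1 : (1 : ℂ) + (z ^ 2)⁻¹ ≠ 0 := slitPlane_ne_zero (glue_invsq_mem hzpos.ne')
      have heq := hqeq z hzU hzim
      have hS : ((1 + (z ^ 2)⁻¹) ^ (ν + 1 / 2)) • S (f (-z⁻¹))
          = S (q z) + ((1 + z ^ 2) ^ (ν + 1 / 2)) • f z := by
        have h2 := congrArg S heq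
        rw [map_sub, LinearMap.map_smul, LinearMap.map_smul, hSS] at h2
        rw [← h2]; abel
      set c : ℂ := z ^ (-2 * ν - 1) * (1 + (z ^ 2)⁻¹) ^ (-(ν + 1 / 2)) with hc
      have hmulc : c * ((1 + (z ^ 2)⁻¹) ^ (ν + 1 / 2)) = z ^ (-2 * ν - 1) := by
        rw [hc, Complex.cpow_neg, mul_assoc,
          inv_mul_cancel₀ (glue_cpow_ne_zero h1 _), mul_one]
      have hone : c * ((1 + z ^ 2) ^ (ν + 1 / 2)) = 1 := glue_key3 hzpos ν
      calc f z - (z ^ (-2 * ν - 1)) • S (f (-z⁻¹))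
          = f z - (c * ((1 + (z ^ 2)⁻¹) ^ (ν + 1 / 2))) • S (f (-z⁻¹)) := by rw [hmulc]
        _ = f z - c • (((1 + (z ^ 2)⁻¹) ^ (ν + 1 / 2)) • S (f (-z⁻¹))) := by rw [mul_smul]
        _ = f z - c • (S (q z) + ((1 + z ^ 2) ^ (ν + 1 / 2)) • f z) := by rw [hS]
        _ = f z - c • S (q z) - (c * ((1 + z ^ 2) ^ (ν + 1 / 2))) • f z := by
            rw [smul_add, ← mul_smul]; abel
        _ = -(c • S (q z)) := by rw [hone, one_smul]; abel
    intro z hzP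
    rcases eq_or_ne z.im 0 with him | him
    · -- z is a positive real
      have hzpos : 0 < z.re := hzP.resolve_right (fun hc => hc him)
      have hzU : z ∈ U := hUsub ⟨him, glue_ne_zero hzpos.ne'⟩
      have hW : IsOpen (U ∩ {w : ℂ | 0 < w.re}) :=
        hUo.inter (isOpen_lt continuous_const Complex.continuous_re)
      have heqφ : (fun w => if w.im ≠ 0 then f w - (w ^ (-2 * ν - 1)) • S (f (-w⁻¹))
          else -((w ^ (-2 * ν - 1) * (1 + (w ^ 2)⁻¹) ^ (-(ν + 1 / 2))) • S (q w))) =ᶠ[𝓝 z]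
          (fun w => -((w ^ (-2 * ν - 1) * (1 + (w ^ 2)⁻¹) ^ (-(ν + 1 / 2))) • Sc (q w))) := by
        filter_upwards [hW.mem_nhds ⟨hzU, hzpos⟩] with w hw
        rcases eq_or_ne w.im 0 with hwim | hwim
        · rw [if_neg (fun hc => hc hwim), hScoe]
        · rw [if_pos hwim, hkey w hw.1 hw.2 hwim, hScoe]
      have hz0 : z ≠ 0 := glue_ne_zero hzpos.ne'
      have hd1 : DifferentiableAt ℂ (fun w : ℂ => w ^ (-2 * ν - 1)) z :=
        DifferentiableAt.cpow differentiableAt_id (differentiableAt_const _) hzP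
      have hd2 : DifferentiableAt ℂ (fun w : ℂ => (1 + (w ^ 2)⁻¹) ^ (-(ν + 1 / 2))) z :=
        DifferentiableAt.cpow (((differentiableAt_id.pow 2).inv
          (pow_ne_zero 2 hz0)).const_add 1) (differentiableAt_const _)
          (glue_invsq_mem hzpos.ne')
      have hd3 : DifferentiableAt ℂ (fun w => Sc (q w)) z :=
        (Sc.differentiable.differentiableAt).comp z
          (hq.differentiableAt (hUo.mem_nhds hzU))
      exact ((((hd1.mul hd2).smul hd3).neg).congr_of_eventuallyEq heqφ).differentiableWithinAt
    · -- z.im ≠ 0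
      have hz0 : z ≠ 0 := fun h => him (by simp [h])
      have heqh : (fun w => if w.im ≠ 0 then f w - (w ^ (-2 * ν - 1)) • S (f (-w⁻¹))
          else -((w ^ (-2 * ν - 1) * (1 + (w ^ 2)⁻¹) ^ (-(ν + 1 / 2))) • S (q w))) =ᶠ[𝓝 z]
          (fun w => f w - (w ^ (-2 * ν - 1)) • Sc (f (-w⁻¹))) := by
        filter_upwards [hopim.mem_nhds him] with w hw
        rw [if_pos hw, hScoe]
      have hfz : DifferentiableAt ℂ f z := hf.holo.differentiableAt (hopim.mem_nhds him)
      have hd1 : DifferentiableAt ℂ (fun w : ℂ => w ^ (-2 * ν - 1)) z :=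
        DifferentiableAt.cpow differentiableAt_id (differentiableAt_const _) hzP
      have hinner : DifferentiableAt ℂ (fun w : ℂ => -w⁻¹) z :=
        (differentiableAt_id.inv hz0).neg
      have hfat : DifferentiableAt ℂ f (-z⁻¹) :=
        hf.holo.differentiableAt (hopim.mem_nhds (hinv_im z him))
      have hcomp : DifferentiableAt ℂ (fun w : ℂ => f (-w⁻¹)) z := by
        have := hfat.comp z hinner
        simpa [Function.comp_def] using this
      have hScomp : DifferentiableAt ℂ (fun w => Sc (f (-w⁻¹))) z :=
        (Sc.differentiable.differentiableAt).comp z hcomp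
      exact ((hfz.sub (hd1.smul hScomp)).congr_of_eventuallyEq heqh).differentiableWithinAt

end
end

section
/- Bruggeman transform, forward direction. Let ν ∈ ℂ and f ∈ F_η. Define ψ(z) := f(z) - z^{-2ν-1} η(S) f(-1/z) for z ∈ ℂ∖ℝ, and assume that ψ extends to a holomorphic function (still denoted ψ) on ℂ∖(-∞,0]. Then: (a) ψ satisfies the Lewis equation η(T)ψ(z) = ψ(z+1) + (z+1)^{-2ν-1} η(ST⁻¹) ψ(z/(z+1)) for every z ∈ ℂ∖(-∞,0]; (b) the limits L₊ := lim_{Im z→+∞} (ψ(z) + z^{-2ν-1} η(S) ψ(-1/z)) and L₋ := lim_{Im z→-∞} (ψ(z) + z^{-2ν-1} η(S) ψ(-1/z)) exist and satisfy e^{πiν} L₊ + e^{-πiν} L₋ = 0. In other words, ψ ∈ Ψ_{ν,η}. -/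
open Complex Filter Topology MeasureTheory Set

noncomputable section

variable {V : Type} [NormedAddCommGroup V] [NormedSpace ℂ V]

/-- `ψ(z) + z^{-2ν-1} η(S) ψ(-1/z)`. -/
def lewisCombo (ν : ℂ) (η : SL2Z →* (V →ₗ[ℂ] V)ˣ) (ψ : ℂ → V) : ℂ → V :=
  fun z => ψ z + (z ^ (-2 * ν - 1)) • (η Smat : V →ₗ[ℂ] V) (ψ (-z⁻¹))

/-- The space `Ψ_{ν,η}`. -/
structure MemPsi (ν : ℂ) (η : SL2Z →* (V →ₗ[ℂ] V)ˣ) (ψ : ℂ → V) : Prop where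
  holo : DifferentiableOn ℂ ψ Complex.slitPlane
  lewis : ∀ z ∈ Complex.slitPlane,
    (η Tmat : V →ₗ[ℂ] V) (ψ z) =
      ψ (z + 1) + ((z + 1) ^ (-2 * ν - 1)) •
        (η (Smat * Tmat⁻¹) : V →ₗ[ℂ] V) (ψ (z / (z + 1)))
  limits : ∃ Lp Lm : V,
    Tendsto (lewisCombo ν η ψ) (comap Complex.im atTop) (𝓝 Lp) ∧
    Tendsto (lewisCombo ν η ψ) (comap Complex.im atBot) (𝓝 Lm) ∧
    Complex.exp (Real.pi * I * ν) • Lp + Complex.exp (-(Real.pi * I * ν)) • Lm = 0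

section Helpers

lemma BF.arg_pos_of_im_pos {z : ℂ} (hz : 0 < z.im) : 0 < z.arg := by
  rcases lt_or_eq_of_le (Complex.arg_nonneg_iff.mpr hz.le) with h | h
  · exact h
  · exact absurd (Complex.arg_eq_zero_iff.mp h.symm).2 hz.ne'

lemma BF.log_neg_inv_of_im_pos {z : ℂ} (hz : 0 < z.im) :
    Complex.log (-z⁻¹) = Real.pi * I - Complex.log z := by
  have hz0 : z ≠ 0 := fun h => by simp [h] at hz
  have hnegz : Complex.log z = Complex.log (-z) + Real.pi * I := by
    have h1 : Complex.log ((-z) * (-1)) = Complex.log (-z) + Complex.log (-1) := by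
      refine Complex.log_mul (neg_ne_zero.mpr hz0) (by norm_num) ?_
      rw [Complex.arg_neg_one]
      constructor
      · have := Complex.neg_pi_lt_arg (-z); have := Real.pi_pos; linarith
      · have : (-z).arg < 0 := Complex.arg_neg_iff.mpr (by simp [hz])
        linarith
    rw [neg_mul_neg, mul_one] at h1
    rw [h1, Complex.log_neg_one]
  have hinv : Complex.log (-z⁻¹) = -Complex.log (-z) := by
    rw [neg_inv]
    refine Complex.log_inv _ ?_
    intro h
    have := (Complex.arg_eq_pi_iff.mp h).2
    simp only [Complex.neg_im, neg_eq_zero] at this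
    exact hz.ne' this
  rw [hinv, hnegz]; ring

lemma BF.log_neg_inv_of_im_neg {z : ℂ} (hz : z.im < 0) :
    Complex.log (-z⁻¹) = -(Real.pi * I) - Complex.log z := by
  have hz0 : z ≠ 0 := fun h => by simp [h] at hz
  have hnegz : Complex.log (-z) = Complex.log z + Real.pi * I := by
    have h1 : Complex.log (z * (-1)) = Complex.log z + Complex.log (-1) := by
      refine Complex.log_mul hz0 (by norm_num) ?_
      rw [Complex.arg_neg_one]
      constructor
      · have := Real.pi_pos; linarith [Complex.neg_pi_lt_arg z]
      · have : z.arg < 0 := Complex.arg_neg_iff.mpr hz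
        linarith
    rw [mul_neg_one] at h1
    rw [h1, Complex.log_neg_one]
  have hinv : Complex.log (-z⁻¹) = -Complex.log (-z) := by
    rw [neg_inv]
    refine Complex.log_inv _ ?_
    intro h
    have := (Complex.arg_eq_pi_iff.mp h).2
    simp only [Complex.neg_im, neg_eq_zero] at this
    exact hz.ne this
  rw [hinv, hnegz]; ring

lemma BF.log_div_succ_of_im_pos {z : ℂ} (hz : 0 < z.im) :
    Complex.log (z / (z + 1)) = Complex.log z - Complex.log (z + 1) := by
  have him1 : 0 < (z + 1).im := by simpa using hz
  have hz0 : z ≠ 0 := fun h => by simp [h] at hz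
  have hz10 : z + 1 ≠ 0 := fun h => by
    have : (z + 1).im = 0 := by rw [h]; simp
    simp at this; exact him1.ne' (by simpa using this)
  have harg1 : (z + 1).arg ≠ Real.pi := by
    intro h; exact him1.ne' (Complex.arg_eq_pi_iff.mp h).2
  have h1 : Complex.log (z * (z + 1)⁻¹) = Complex.log z + Complex.log (z + 1)⁻¹ := by
    refine Complex.log_mul hz0 (inv_ne_zero hz10) ?_
    rw [Complex.arg_inv, if_neg harg1]
    constructor
    · have h2 : 0 < z.arg := BF.arg_pos_of_im_pos hz
      have h3 := Complex.arg_le_pi (z + 1)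
      linarith
    · have h2 := Complex.arg_le_pi z
      have h3 : 0 < (z + 1).arg := BF.arg_pos_of_im_pos him1
      linarith
  rw [div_eq_mul_inv, h1, Complex.log_inv _ harg1]; ring

open scoped ComplexOrder in
lemma BF.isPreconnected_slitPlane : IsPreconnected Complex.slitPlane := by
  apply isPreconnected_of_forall (1 : ℂ)
  intro y hy
  exact ⟨segment ℝ 1 y, Complex.starConvex_one_slitPlane.segment_subset hy,
    left_mem_segment _ _ _, right_mem_segment _ _ _, (convex_segment _ _).isPreconnected⟩

lemma BF.mem_slitPlane_of_im_ne {z : ℂ} (hz : z.im ≠ 0) : z ∈ Complex.slitPlane :=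
  Complex.mem_slitPlane_iff.mpr (Or.inr hz)

open scoped ComplexOrder in
lemma BF.slit_add_one {z : ℂ} (hz : z ∈ Complex.slitPlane) : z + 1 ∈ Complex.slitPlane := by
  rw [Complex.mem_slitPlane_iff_not_le_zero] at hz ⊢
  intro h
  apply hz
  have h1 : z + 1 - 1 ≤ 0 - 1 := sub_le_sub_right h 1
  have h2 : (0 : ℂ) - 1 ≤ 0 := by
    rw [Complex.le_def]; norm_num
  calc z = z + 1 - 1 := by ring
  _ ≤ 0 - 1 := h1
  _ ≤ 0 := h2

lemma BF.slit_add_one_ne {z : ℂ} (hz : z ∈ Complex.slitPlane) : z + 1 ≠ 0 :=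
  Complex.slitPlane_ne_zero (BF.slit_add_one hz)

open scoped ComplexOrder in
lemma BF.slit_div_succ {z : ℂ} (hz : z ∈ Complex.slitPlane) :
    z / (z + 1) ∈ Complex.slitPlane := by
  have h1 : z + 1 ≠ 0 := BF.slit_add_one_ne hz
  rw [Complex.mem_slitPlane_iff_not_le_zero] at hz ⊢
  intro h
  apply hz
  set w := z / (z + 1) with hw
  have hre : w.re ≤ 0 := by rw [Complex.le_def] at h; simpa using h.1
  have him : w.im = 0 := by rw [Complex.le_def] at h; simpa using h.2
  set t := w.re with ht
  have hw0 : w = (t : ℂ) := Complex.ext rfl (by simpa using him)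
  have hzw : z = w * (z + 1) := by
    rw [hw, div_mul_cancel₀ _ h1]
  have h1t : (0:ℝ) < 1 - t := sub_pos.mpr (hre.trans_lt one_pos)
  have hz' : z = ((t / (1 - t) : ℝ) : ℂ) := by
    have key : z * (1 - (t : ℂ)) = t := by
      rw [hw0] at hzw; linear_combination hzw
    have h1t' : ((1 - t : ℝ) : ℂ) ≠ 0 := by
      exact_mod_cast Complex.ofReal_ne_zero.mpr h1t.ne'
    push_cast
    push_cast at h1t'
    rw [eq_div_iff h1t']
    linear_combination key
  have hdiv : t / (1 - t) ≤ 0 := div_nonpos_of_nonpos_of_nonneg hre h1t.le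
  rw [hz', Complex.le_def]
  refine ⟨?_, ?_⟩
  · simp only [Complex.ofReal_re, Complex.zero_re]; exact hdiv
  · simp only [Complex.ofReal_im, Complex.zero_im]

lemma BF.tendsto_of_periodic_bounded [FiniteDimensional ℂ V]
    (g : ℂ → V) (N : ℝ) (hN : 0 < N) (hper : ∀ z, g (z + N) = g z)
    (hhol : ∀ z : ℂ, 0 < z.im → DifferentiableAt ℂ g z)
    (C : ℝ) (hbd : ∀ z : ℂ, 1 ≤ z.im → ‖g z‖ ≤ C) :
    ∃ A : V, Tendsto g (comap Complex.im atTop) (𝓝 A) := by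
  classical
  set n := Module.finrank ℂ V
  set b : Module.Basis (Fin n) ℂ V := Module.finBasis ℂ V
  set φ : Fin n → (V →L[ℂ] ℂ) := fun i => LinearMap.toContinuousLinearMap (b.coord i)
  have hev_pos : ∀ᶠ z : ℂ in comap Complex.im atTop, 0 < z.im :=
    tendsto_comap.eventually (eventually_gt_atTop 0)
  have hev_one : ∀ᶠ z : ℂ in comap Complex.im atTop, 1 ≤ z.im :=
    tendsto_comap.eventually (eventually_ge_atTop 1)
  have key : ∀ i : Fin n, Tendsto (fun z => φ i (g z)) (comap Complex.im atTop)
      (𝓝 (Function.Periodic.cuspFunction N (fun z => φ i (g z)) 0)) := by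
    intro i
    refine Function.Periodic.tendsto_at_I_inf hN (fun z => by simp [hper z]) ?_ ?_
    · filter_upwards [hev_pos] with z hz
      exact ((φ i).differentiableAt).comp z (hhol z hz)
    · rw [Filter.BoundedAtFilter]
      apply Asymptotics.IsBigO.of_bound (‖φ i‖ * C)
      filter_upwards [hev_one] with z hz
      simp only [Pi.one_apply, norm_one, mul_one]
      calc ‖φ i (g z)‖ ≤ ‖φ i‖ * ‖g z‖ := (φ i).le_opNorm _
      _ ≤ ‖φ i‖ * C := mul_le_mul_of_nonneg_left (hbd z hz) (norm_nonneg _)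
  refine ⟨∑ i, (Function.Periodic.cuspFunction N (fun z => φ i (g z)) 0) • b i, ?_⟩
  have h2 : Tendsto (fun z => ∑ i, (φ i (g z)) • b i) (comap Complex.im atTop)
      (𝓝 (∑ i, (Function.Periodic.cuspFunction N (fun z => φ i (g z)) 0) • b i)) :=
    tendsto_finset_sum _ fun i _ => (key i).smul_const (b i)
  refine h2.congr fun z => ?_
  simpa [φ, Module.Basis.coord_apply] using b.sum_repr (g z)

end Helpers

/-- **Bruggeman transform, forward direction** (part of Proposition 2.3 of the paper):
if `f ∈ F_η` and `ψ(z) = f(z) - z^{-2ν-1} η(S) f(-1/z)` extends holomorphically to the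
slit plane, then the extension satisfies the Lewis equation and the limit condition,
i.e. it belongs to `Ψ_{ν,η}`. -/
theorem bruggeman_forward [FiniteDimensional ℂ V] [Nontrivial V]
    (η : SL2Z →* (V →ₗ[ℂ] V)ˣ) (hη1 : η negI = 1) (hηfin : (Set.range η).Finite)
    (ν : ℂ) (f : ℂ → V) (hf : MemFeta η f)
    (ψ : ℂ → V) (hψholo : DifferentiableOn ℂ ψ Complex.slitPlane)
    (hψeq : ∀ z : ℂ, z.im ≠ 0 →
      ψ z = f z - (z ^ (-2 * ν - 1)) • (η Smat : V →ₗ[ℂ] V) (f (-z⁻¹))) :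
    MemPsi ν η ψ := by
  classical
  set a : ℂ := -2 * ν - 1 with ha
  -- matrix identities
  have hSSmat : Smat * Smat = negI := by
    ext i j
    fin_cases i <;> fin_cases j <;>
      simp only [Matrix.SpecialLinearGroup.coe_mul] <;>
      simp [Smat, negI, Matrix.SpecialLinearGroup.coe_mul, Matrix.mul_apply, Fin.sum_univ_two]
  have hTSTmat : Tmat * Smat * Tmat = Smat * Tmat⁻¹ * Smat := by
    ext i j
    simp only [Matrix.SpecialLinearGroup.coe_mul, Matrix.SpecialLinearGroup.coe_inv]
    fin_cases i <;> fin_cases j <;>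
      simp [Smat, Tmat, Matrix.adjugate_fin_two, Matrix.mul_apply, Fin.sum_univ_two]
  -- applications of η as linear maps
  have happ : ∀ (g h : SL2Z) (x : V),
      (η g : V →ₗ[ℂ] V) ((η h : V →ₗ[ℂ] V) x) = (η (g * h) : V →ₗ[ℂ] V) x := by
    intro g h x
    rw [map_mul, Units.val_mul, Module.End.mul_apply]
  have hSS : ∀ x : V, (η Smat : V →ₗ[ℂ] V) ((η Smat : V →ₗ[ℂ] V) x) = x := by
    intro x
    rw [happ, hSSmat, hη1, Units.val_one, Module.End.one_apply]
  have hCA : ∀ x : V, (η (Smat * Tmat⁻¹) : V →ₗ[ℂ] V) ((η Tmat : V →ₗ[ℂ] V) x)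
      = (η Smat : V →ₗ[ℂ] V) x := by
    intro x
    rw [happ, inv_mul_cancel_right]
  have hTST : ∀ x : V, (η Tmat : V →ₗ[ℂ] V) ((η Smat : V →ₗ[ℂ] V) ((η Tmat : V →ₗ[ℂ] V) x))
      = (η (Smat * Tmat⁻¹) : V →ₗ[ℂ] V) ((η Smat : V →ₗ[ℂ] V) x) := by
    intro x
    rw [happ, happ, happ, hTSTmat]
  -- imaginary part computations
  have him_neg_inv : ∀ z : ℂ, z ≠ 0 → (-z⁻¹).im = z.im / Complex.normSq z := by
    intro z hz
    rw [Complex.neg_im, Complex.inv_im, neg_div, neg_neg]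
  have him_div : ∀ z : ℂ, z + 1 ≠ 0 → (z / (z + 1)).im = z.im / Complex.normSq (z + 1) := by
    intro z h1
    have : z / (z + 1) = 1 - (z + 1)⁻¹ := by
      field_simp; ring
    rw [this, Complex.sub_im, Complex.one_im, Complex.inv_im, Complex.add_im, Complex.one_im,
      add_zero, neg_div, zero_sub, neg_neg]
  -- the pointwise Lewis equation on the upper half-plane
  have lewis_pt : ∀ z : ℂ, 0 < z.im →
      (η Tmat : V →ₗ[ℂ] V) (ψ z) =
        ψ (z + 1) + ((z + 1) ^ a) •
          (η (Smat * Tmat⁻¹) : V →ₗ[ℂ] V) (ψ (z / (z + 1))) := by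
    intro z hz
    have hz0 : z ≠ 0 := fun h => by simp [h] at hz
    have him1 : 0 < (z + 1).im := by simpa using hz
    have h10 : z + 1 ≠ 0 := fun h => by
      have := congrArg Complex.im h; simp at this; exact him1.ne' (by simpa using this)
    have hdne : z / (z + 1) ≠ 0 := div_ne_zero hz0 h10
    have himd : 0 < (z / (z + 1)).im := by
      rw [him_div z h10]
      exact div_pos hz (Complex.normSq_pos.mpr h10)
    have himi1 : 0 < (-(z + 1)⁻¹).im := by
      rw [him_neg_inv _ h10]
      exact div_pos him1 (Complex.normSq_pos.mpr h10)
    have himw : 0 < (-(z + 1) / z).im := by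
      have heq : -(z + 1) / z = -1 + -z⁻¹ := by field_simp; ring
      have : 0 < (-z⁻¹).im := by
        rw [him_neg_inv _ hz0]; exact div_pos hz (Complex.normSq_pos.mpr hz0)
      rw [heq, Complex.add_im]
      simpa using this
    -- periodicity facts
    have p1 : f (z + 1) = (η Tmat : V →ₗ[ℂ] V) (f z) := hf.periodic z hz.ne'
    have p2 : f (z / (z + 1)) = (η Tmat : V →ₗ[ℂ] V) (f (-(z + 1)⁻¹)) := by
      have harg : z / (z + 1) = -(z + 1)⁻¹ + 1 := by field_simp; ring
      rw [harg]
      exact hf.periodic _ himi1.ne'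
    have p3 : f (-z⁻¹) = (η Tmat : V →ₗ[ℂ] V) (f (-(z + 1) / z)) := by
      have harg : -z⁻¹ = -(z + 1) / z + 1 := by field_simp; ring
      rw [harg]
      exact hf.periodic _ himw.ne'
    have harg2 : -(z / (z + 1))⁻¹ = -(z + 1) / z := by
      rw [inv_div, neg_div]
    -- the scalar identity
    have hsc : (z + 1) ^ a * (z / (z + 1)) ^ a = z ^ a := by
      rw [Complex.cpow_def_of_ne_zero h10, Complex.cpow_def_of_ne_zero hdne,
        Complex.cpow_def_of_ne_zero hz0, ← Complex.exp_add, BF.log_div_succ_of_im_pos hz]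
      congr 1; ring
    rw [hψeq z hz.ne', hψeq (z + 1) him1.ne', hψeq (z / (z + 1)) himd.ne', harg2, p1, p2, p3]
    simp only [map_sub, _root_.map_smul, smul_sub, smul_smul]
    rw [hCA, hTST, hsc]
    abel
  -- part (a): the Lewis equation on the slit plane, by analytic continuation
  have lewis_all : ∀ z ∈ Complex.slitPlane,
      (η Tmat : V →ₗ[ℂ] V) (ψ z) =
        ψ (z + 1) + ((z + 1) ^ a) •
          (η (Smat * Tmat⁻¹) : V →ₗ[ℂ] V) (ψ (z / (z + 1))) := by
    set MT : V →L[ℂ] V := LinearMap.toContinuousLinearMap (η Tmat : V →ₗ[ℂ] V) with hMT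
    set MC : V →L[ℂ] V := LinearMap.toContinuousLinearMap (η (Smat * Tmat⁻¹) : V →ₗ[ℂ] V)
      with hMC
    set G : ℂ → V := fun z => MT (ψ z) -
      (ψ (z + 1) + ((z + 1) ^ a) • MC (ψ (z / (z + 1)))) with hG
    have hGdiff : DifferentiableOn ℂ G Complex.slitPlane := by
      have d1 : DifferentiableOn ℂ (fun z => MT (ψ z)) Complex.slitPlane :=
        MT.differentiable.comp_differentiableOn hψholo
      have d2 : DifferentiableOn ℂ (fun z : ℂ => ψ (z + 1)) Complex.slitPlane := by
        refine hψholo.comp ?_ fun z hz => BF.slit_add_one hz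
        exact (differentiable_id.add_const 1).differentiableOn
      have d3 : DifferentiableOn ℂ (fun z : ℂ => ψ (z / (z + 1))) Complex.slitPlane := by
        refine hψholo.comp ?_ fun z hz => BF.slit_div_succ hz
        exact DifferentiableOn.div differentiableOn_id
          ((differentiable_id.add_const 1).differentiableOn)
          fun z hz => BF.slit_add_one_ne hz
      have d4 : DifferentiableOn ℂ (fun z : ℂ => (z + 1) ^ a) Complex.slitPlane := by
        intro z hz
        exact (((differentiableAt_id.add_const 1).cpow (differentiableAt_const a)
          (BF.slit_add_one hz))).differentiableWithinAt
      exact d1.sub (d2.add (d4.smul (MC.differentiable.comp_differentiableOn d3)))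
    have hGzero : EqOn G 0 Complex.slitPlane := by
      have hGanal : AnalyticOnNhd ℂ G Complex.slitPlane :=
        hGdiff.analyticOnNhd Complex.isOpen_slitPlane
      refine hGanal.eqOn_zero_of_preconnected_of_eventuallyEq_zero
        BF.isPreconnected_slitPlane (z₀ := I) (by simp [Complex.mem_slitPlane_iff]) ?_
      have hopen : IsOpen {z : ℂ | 0 < z.im} := by
        have : {z : ℂ | 0 < z.im} = Complex.im ⁻¹' (Set.Ioi 0) := rfl
        rw [this]; exact isOpen_Ioi.preimage Complex.continuous_im
      have hImem : I ∈ {z : ℂ | 0 < z.im} := by simp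
      filter_upwards [hopen.mem_nhds hImem] with z hz
      have := lewis_pt z hz
      simp only [hG, Pi.zero_apply, sub_eq_zero]
      simpa [MT, MC] using this
    intro z hz
    have := hGzero hz
    simp only [hG, Pi.zero_apply, sub_eq_zero] at this
    simpa [MT, MC] using this
  -- finite order of η Tmat
  obtain ⟨N, hNpos, hNone⟩ : ∃ N : ℕ, 0 < N ∧ η Tmat ^ N = 1 := by
    have hmaps : MapsTo (fun n : ℕ => η Tmat ^ n) Set.univ (Set.range η) :=
      fun n _ => ⟨Tmat ^ n, by rw [map_pow]⟩
    obtain ⟨m, -, k, -, hmk, he⟩ :=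
      Set.infinite_univ.exists_ne_map_eq_of_mapsTo hmaps hηfin
    rcases hmk.lt_or_gt with h | h
    · refine ⟨k - m, by omega, ?_⟩
      have h2 : η Tmat ^ m * η Tmat ^ (k - m) = η Tmat ^ m * 1 := by
        rw [mul_one, ← pow_add]
        rw [he]; congr 1; omega
      exact mul_left_cancel h2
    · refine ⟨m - k, by omega, ?_⟩
      have h2 : η Tmat ^ k * η Tmat ^ (m - k) = η Tmat ^ k * 1 := by
        rw [mul_one, ← pow_add]
        rw [← he]; congr 1; omega
      exact mul_left_cancel h2
  -- f is N-periodic off the real axis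
  have hfper : ∀ z : ℂ, z.im ≠ 0 → f (z + (N : ℂ)) = f z := by
    have hn : ∀ (n : ℕ) (z : ℂ), z.im ≠ 0 →
        f (z + (n : ℂ)) = (((η Tmat : V →ₗ[ℂ] V)) ^ n) (f z) := by
      intro n
      induction n with
      | zero => intro z hz; simp
      | succ n ih =>
        intro z hz
        have h1 : z + ((n : ℕ) + 1 : ℕ) = (z + n) + 1 := by push_cast; ring
        rw [h1, hf.periodic (z + n) (by simpa using hz), ih z hz]
        have h2 : ((η Tmat : V →ₗ[ℂ] V)) ^ (n + 1)
            = (η Tmat : V →ₗ[ℂ] V) * ((η Tmat : V →ₗ[ℂ] V)) ^ n := pow_succ' _ _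
        rw [h2, Module.End.mul_apply]
    intro z hz
    have h3 := hn N z hz
    rw [← Units.val_pow_eq_pow_val, hNone, Units.val_one, Module.End.one_apply] at h3
    exact h3
  obtain ⟨C, hC⟩ := hf.bounded
  obtain ⟨av, bv, hav, hbv, habv⟩ := hf.limits
  have hbv' : bv = -av := eq_neg_of_add_eq_zero_right habv
  -- the open upper/lower half planes
  have hopen_ne : IsOpen {z : ℂ | z.im ≠ 0} :=
    isOpen_ne_fun Complex.continuous_im continuous_const
  -- limits of f at ±i∞
  have hlim_top : Tendsto f (comap Complex.im atTop) (𝓝 av) := by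
    set F : ℂ → V := fun z => if z.im = 0 then 0 else f z with hF
    have hFeq : ∀ z : ℂ, z.im ≠ 0 → F z = f z := fun z hz => by simp [hF, hz]
    have hFper : ∀ z : ℂ, F (z + (N : ℝ)) = F z := by
      intro z
      have him : (z + ((N : ℝ) : ℂ)).im = z.im := by simp
      by_cases hz : z.im = 0
      · simp [hF, him, hz]
      · rw [hFeq _ (by rw [him]; exact hz), hFeq _ hz]
        exact_mod_cast hfper z hz
    have hFhol : ∀ z : ℂ, 0 < z.im → DifferentiableAt ℂ F z := by
      intro z hz
      have hdf : DifferentiableAt ℂ f z :=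
        (hf.holo z hz.ne').differentiableAt (hopen_ne.mem_nhds hz.ne')
      refine hdf.congr_of_eventuallyEq ?_
      filter_upwards [hopen_ne.mem_nhds (show z.im ≠ 0 from hz.ne')] with w hw
      exact hFeq w hw
    have hFbd : ∀ z : ℂ, 1 ≤ z.im → ‖F z‖ ≤ C := by
      intro z hz
      rw [hFeq z (by linarith)]
      exact hC z (by rw [abs_of_pos (by linarith)]; exact hz)
    obtain ⟨A, hA⟩ := BF.tendsto_of_periodic_bounded F N (by exact_mod_cast hNpos) hFper
      hFhol C hFbd
    have hAa : A = av := by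
      have ht1 : Tendsto (fun t : ℝ => (t : ℂ) * I) atTop (comap Complex.im atTop) := by
        rw [tendsto_comap_iff]
        convert tendsto_id (α := ℝ) (x := atTop) using 1
        funext t; simp
      have h1 : Tendsto (fun t : ℝ => F ((t : ℂ) * I)) atTop (𝓝 A) := hA.comp ht1
      have h2 : Tendsto (fun t : ℝ => F ((t : ℂ) * I)) atTop (𝓝 av) := by
        refine hav.congr' ?_
        filter_upwards [eventually_gt_atTop (0:ℝ)] with t ht
        exact (hFeq _ (by simpa using ht.ne')).symm
      exact tendsto_nhds_unique h1 h2
    rw [← hAa]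
    refine hA.congr' ?_
    filter_upwards [tendsto_comap.eventually (eventually_gt_atTop (0:ℝ))] with z hz
    exact hFeq z hz.ne'
  have hlim_bot : Tendsto f (comap Complex.im atBot) (𝓝 bv) := by
    set F : ℂ → V := fun z => if z.im = 0 then 0 else f (-z) with hF
    have hFeq : ∀ z : ℂ, z.im ≠ 0 → F z = f (-z) := fun z hz => by simp [hF, hz]
    have hFper : ∀ z : ℂ, F (z + (N : ℝ)) = F z := by
      intro z
      have him : (z + ((N : ℝ) : ℂ)).im = z.im := by simp
      by_cases hz : z.im = 0
      · simp [hF, him, hz]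
      · rw [hFeq _ (by rw [him]; exact hz), hFeq _ hz]
        have h3 : -(z + ((N:ℝ) : ℂ)) = -z - ((N:ℕ):ℂ) := by push_cast; ring
        rw [h3]
        have h4 := hfper (-z - ((N:ℕ):ℂ)) (by simpa using hz)
        have h5 : -z - ((N:ℕ):ℂ) + ((N:ℕ):ℂ) = -z := by ring
        rw [h5] at h4
        exact h4.symm
    have hFhol : ∀ z : ℂ, 0 < z.im → DifferentiableAt ℂ F z := by
      intro z hz
      have hdf : DifferentiableAt ℂ f (-z) :=
        (hf.holo (-z) (by simpa using hz.ne')).differentiableAt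
          (hopen_ne.mem_nhds (by simpa using hz.ne'))
      have hdfc : DifferentiableAt ℂ (fun w : ℂ => f (-w)) z :=
        hdf.comp z (differentiable_neg _)
      refine hdfc.congr_of_eventuallyEq ?_
      filter_upwards [hopen_ne.mem_nhds (show z.im ≠ 0 from hz.ne')] with w hw
      exact hFeq w hw
    have hFbd : ∀ z : ℂ, 1 ≤ z.im → ‖F z‖ ≤ C := by
      intro z hz
      rw [hFeq z (by linarith)]
      refine hC (-z) ?_
      rw [Complex.neg_im, abs_neg, abs_of_pos (by linarith)]
      exact hz
    obtain ⟨A, hA⟩ := BF.tendsto_of_periodic_bounded F N (by exact_mod_cast hNpos) hFper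
      hFhol C hFbd
    have hAb : A = bv := by
      have ht1 : Tendsto (fun t : ℝ => (t : ℂ) * I) atTop (comap Complex.im atTop) := by
        rw [tendsto_comap_iff]
        convert tendsto_id (α := ℝ) (x := atTop) using 1
        funext t; simp
      have h1 : Tendsto (fun t : ℝ => F ((t : ℂ) * I)) atTop (𝓝 A) := hA.comp ht1
      have h2 : Tendsto (fun t : ℝ => F ((t : ℂ) * I)) atTop (𝓝 bv) := by
        refine hbv.congr' ?_
        filter_upwards [eventually_gt_atTop (0:ℝ)] with t ht
        exact (hFeq _ (by simpa using ht.ne')).symm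
      exact tendsto_nhds_unique h1 h2
    have hneg : Tendsto (fun z : ℂ => -z) (comap Complex.im atBot) (comap Complex.im atTop) := by
      rw [tendsto_comap_iff]
      have : (Complex.im ∘ fun z : ℂ => -z) = fun z : ℂ => -z.im := by
        funext z; simp
      rw [this]
      exact tendsto_neg_atBot_atTop.comp tendsto_comap
    rw [← hAb]
    have h3 : Tendsto (fun z : ℂ => F (-z)) (comap Complex.im atBot) (𝓝 A) := hA.comp hneg
    refine h3.congr' ?_
    filter_upwards [tendsto_comap.eventually (eventually_lt_atBot (0:ℝ))] with z hz
    rw [hFeq (-z) (by simpa using hz.ne), neg_neg]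
  -- the combo identities
  have combo_up : ∀ z : ℂ, 0 < z.im →
      lewisCombo ν η ψ z = (1 - Complex.exp (Real.pi * I * a)) • f z := by
    intro z hz
    have hz0 : z ≠ 0 := fun h => by simp [h] at hz
    have hiz : 0 < (-z⁻¹).im := by
      rw [him_neg_inv _ hz0]; exact div_pos hz (Complex.normSq_pos.mpr hz0)
    have hiz0 : -z⁻¹ ≠ 0 := by
      simpa using inv_ne_zero hz0
    have harg : -(-z⁻¹)⁻¹ = z := by
      rw [inv_neg, inv_inv, neg_neg]
    have hsc : z ^ a * (-z⁻¹) ^ a = Complex.exp (Real.pi * I * a) := by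
      rw [Complex.cpow_def_of_ne_zero hz0, Complex.cpow_def_of_ne_zero hiz0,
        ← Complex.exp_add, BF.log_neg_inv_of_im_pos hz]
      congr 1; ring
    rw [lewisCombo]
    rw [hψeq z hz.ne', hψeq (-z⁻¹) hiz.ne', harg]
    simp only [map_sub, _root_.map_smul, smul_sub, smul_smul, hSS]
    rw [hsc, sub_smul, one_smul]
    abel
  have combo_dn : ∀ z : ℂ, z.im < 0 →
      lewisCombo ν η ψ z = (1 - Complex.exp (-(Real.pi * I) * a)) • f z := by
    intro z hz
    have hz0 : z ≠ 0 := fun h => by simp [h] at hz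
    have hiz : (-z⁻¹).im < 0 := by
      rw [him_neg_inv _ hz0]
      exact div_neg_of_neg_of_pos hz (Complex.normSq_pos.mpr hz0)
    have hiz0 : -z⁻¹ ≠ 0 := by
      simpa using inv_ne_zero hz0
    have harg : -(-z⁻¹)⁻¹ = z := by
      rw [inv_neg, inv_inv, neg_neg]
    have hsc : z ^ a * (-z⁻¹) ^ a = Complex.exp (-(Real.pi * I) * a) := by
      rw [Complex.cpow_def_of_ne_zero hz0, Complex.cpow_def_of_ne_zero hiz0,
        ← Complex.exp_add, BF.log_neg_inv_of_im_neg hz]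
      congr 1; ring
    rw [lewisCombo]
    rw [hψeq z hz.ne, hψeq (-z⁻¹) hiz.ne, harg]
    simp only [map_sub, _root_.map_smul, smul_sub, smul_smul, hSS]
    rw [hsc, sub_smul, one_smul]
    abel
  -- assemble
  refine ⟨hψholo, lewis_all, ?_⟩
  set cP : ℂ := 1 - Complex.exp (Real.pi * I * a) with hcP
  set cM : ℂ := 1 - Complex.exp (-(Real.pi * I) * a) with hcM
  refine ⟨cP • av, cM • bv, ?_, ?_, ?_⟩
  · refine (hlim_top.const_smul cP).congr' ?_
    filter_upwards [tendsto_comap.eventually (eventually_gt_atTop (0:ℝ))] with z hz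
    exact (combo_up z hz).symm
  · refine (hlim_bot.const_smul cM).congr' ?_
    filter_upwards [tendsto_comap.eventually (eventually_lt_atBot (0:ℝ))] with z hz
    exact (combo_dn z hz).symm
  · rw [hbv', smul_neg, smul_neg, smul_smul, smul_smul, ← sub_eq_add_neg, ← sub_smul]
    convert zero_smul ℂ av
    rw [hcP, hcM, ha]
    have e1 : Complex.exp (↑Real.pi * I * ν) * (1 - Complex.exp (↑Real.pi * I * (-2 * ν - 1)))
        = Complex.exp (↑Real.pi * I * ν) + Complex.exp (-(↑Real.pi * I * ν)) := by
      rw [mul_sub, mul_one, ← Complex.exp_add,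
        show (↑Real.pi : ℂ) * I * ν + ↑Real.pi * I * (-2 * ν - 1)
          = -(↑Real.pi * I * ν) + -(↑Real.pi * I) by ring,
        Complex.exp_add, Complex.exp_neg ((Real.pi : ℂ) * I), Complex.exp_pi_mul_I]
      ring
    have e2 : Complex.exp (-(↑Real.pi * I * ν)) *
          (1 - Complex.exp (-(↑Real.pi * I) * (-2 * ν - 1)))
        = Complex.exp (-(↑Real.pi * I * ν)) + Complex.exp (↑Real.pi * I * ν) := by
      rw [mul_sub, mul_one, ← Complex.exp_add,
        show -((↑Real.pi : ℂ) * I * ν) + -(↑Real.pi * I) * (-2 * ν - 1)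
          = ↑Real.pi * I * ν + ↑Real.pi * I by ring,
        Complex.exp_add, Complex.exp_pi_mul_I]
      ring
    rw [e1, e2]
    ring

end
end

section
/- Bruggeman transform, converse direction. Let ν ∈ ℂ with ν ∉ ½+ℤ, and let ψ : ℂ∖(-∞,0] → V be holomorphic and satisfy the Lewis equation η(T)ψ(z) = ψ(z+1) + (z+1)^{-2ν-1} η(ST⁻¹) ψ(z/(z+1)) for all z ∈ ℂ∖(-∞,0]. Define f : ℂ∖ℝ → V by f(z) := (1+e^{-2πiν})^{-1}(ψ(z) + z^{-2ν-1} η(S) ψ(-1/z)) for Im z > 0 and f(z) := (1+e^{2πiν})^{-1}(ψ(z) + z^{-2ν-1} η(S) ψ(-1/z)) for Im z < 0 (principal-branch powers). Then f is holomorphic and satisfies f(z+1) = η(T) f(z) for all z ∈ ℂ∖ℝ. If moreover ψ satisfies the limit condition that L± := lim_{Im z→±∞} (ψ(z) + z^{-2ν-1} η(S) ψ(-1/z)) exist and e^{πiν}L₊ + e^{-πiν}L₋ = 0, then f ∈ F_η. -/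
open Complex Filter Topology MeasureTheory Set

noncomputable section

variable {V : Type} [NormedAddCommGroup V] [NormedSpace ℂ V]

/-! ### Auxiliary lemmas -/

lemma one_add_exp_ne_pos (ν : ℂ) (hν : ∀ n : ℤ, ν ≠ 1 / 2 + n) :
    1 + Complex.exp (2 * Real.pi * I * ν) ≠ 0 := by
  intro h
  have h1 : Complex.exp (2 * Real.pi * I * ν) = Complex.exp (Real.pi * I) := by
    rw [Complex.exp_pi_mul_I]
    linear_combination h
  obtain ⟨n, hn⟩ := Complex.exp_eq_exp_iff_exists_int.mp h1
  apply hν n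
  have h2 : (2 * (Real.pi : ℂ) * I) ≠ 0 := by
    simp [Real.pi_ne_zero, Complex.I_ne_zero]
  have h3 : (2 * (Real.pi : ℂ) * I) * ν = (2 * (Real.pi : ℂ) * I) * (1 / 2 + n) := by
    linear_combination hn
  exact mul_left_cancel₀ h2 h3

lemma one_add_exp_ne_neg (ν : ℂ) (hν : ∀ n : ℤ, ν ≠ 1 / 2 + n) :
    1 + Complex.exp (-(2 * Real.pi * I * ν)) ≠ 0 := by
  intro h
  have h1 : Complex.exp (-(2 * Real.pi * I * ν)) = Complex.exp (Real.pi * I) := by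
    rw [Complex.exp_pi_mul_I]
    linear_combination h
  obtain ⟨n, hn⟩ := Complex.exp_eq_exp_iff_exists_int.mp h1
  apply hν (-(n+1))
  have h2 : (2 * (Real.pi : ℂ) * I) ≠ 0 := by
    simp [Real.pi_ne_zero, Complex.I_ne_zero]
  have h3 : (2 * (Real.pi : ℂ) * I) * ν = (2 * (Real.pi : ℂ) * I) * (1 / 2 + (-(n+1) : ℤ)) := by
    push_cast
    linear_combination -hn
  exact mul_left_cancel₀ h2 h3

lemma arg_bounds_pos (z : ℂ) (h : 0 < z.im) : 0 < z.arg ∧ z.arg < Real.pi := by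
  constructor
  · rcases lt_or_eq_of_le (Complex.arg_nonneg_iff.mpr h.le) with h'|h'
    · exact h'
    · exact absurd (Complex.arg_eq_zero_iff.mp h'.symm).2 (by linarith)
  · rcases lt_or_eq_of_le (Complex.arg_le_pi z) with h'|h'
    · exact h'
    · exact absurd (Complex.arg_eq_pi_iff.mp h').2 (by linarith)

lemma log_split (z : ℂ) (hz : z.im ≠ 0) :
    Complex.log (z + 1) + Complex.log (z / (z + 1)) = Complex.log z := by
  have hz0 : z ≠ 0 := fun h => hz (by simp [h])
  have hz1 : z + 1 ≠ 0 := fun h => hz (by simpa using congrArg Complex.im h)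
  have hb : z / (z + 1) ≠ 0 := div_ne_zero hz0 hz1
  have hprod : (z + 1) * (z / (z + 1)) = z := by field_simp
  have hexp : Complex.exp (Complex.log (z + 1) + Complex.log (z / (z + 1))) =
      Complex.exp (Complex.log z) := by
    rw [Complex.exp_add, Complex.exp_log hz1, Complex.exp_log hb, Complex.exp_log hz0, hprod]
  obtain ⟨n, hn⟩ := Complex.exp_eq_exp_iff_exists_int.mp hexp
  have him : (z + 1).arg + (z / (z + 1)).arg = z.arg + n * (2 * Real.pi) := by
    have := congrArg Complex.im hn
    simpa [Complex.log_im] using this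
  have hπ := Real.pi_pos
  have him1 : (z + 1).im = z.im := by simp
  have him2 : (z / (z + 1)).im = z.im / Complex.normSq (z + 1) := by
    have e : z / (z + 1) = 1 - (z + 1)⁻¹ := by field_simp; ring
    rw [e]
    simp [Complex.sub_im, Complex.inv_im, neg_div]
  have hnsq : 0 < Complex.normSq (z + 1) := Complex.normSq_pos.mpr hz1
  have hn0 : n = 0 := by
    rcases hz.lt_or_gt with hneg | hpos
    · have b1 := Complex.neg_pi_lt_arg (z + 1)
      have b2 := Complex.arg_neg_iff.mpr (show (z+1).im < 0 by rw [him1]; exact hneg)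
      have b3 := Complex.neg_pi_lt_arg (z / (z + 1))
      have b4 := Complex.arg_neg_iff.mpr (show (z/(z+1)).im < 0 by
        rw [him2]; exact div_neg_of_neg_of_pos hneg hnsq)
      have b5 := Complex.neg_pi_lt_arg z
      have b6 := Complex.arg_neg_iff.mpr hneg
      have l1 : (n:ℝ) < 1 := by nlinarith
      have l2 : (-1:ℝ) < n := by nlinarith
      have l1' : n < 1 := by exact_mod_cast l1
      have l2' : -1 < n := by exact_mod_cast l2
      omega
    · obtain ⟨b1, b2⟩ := arg_bounds_pos (z + 1) (by rw [him1]; exact hpos)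
      obtain ⟨b3, b4⟩ := arg_bounds_pos (z / (z + 1)) (by
        rw [him2]; exact div_pos hpos hnsq)
      obtain ⟨b5, b6⟩ := arg_bounds_pos z hpos
      have l1 : (n:ℝ) < 1 := by nlinarith
      have l2 : (-1:ℝ) < n := by nlinarith
      have l1' : n < 1 := by exact_mod_cast l1
      have l2' : -1 < n := by exact_mod_cast l2
      omega
  rw [hn0] at hn
  simpa using hn

lemma cpow_split (z : ℂ) (hz : z.im ≠ 0) (s : ℂ) :
    (z + 1) ^ s * (z / (z + 1)) ^ s = z ^ s := by
  have hz0 : z ≠ 0 := fun h => hz (by simp [h])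
  have hz1 : z + 1 ≠ 0 := fun h => hz (by simpa using congrArg Complex.im h)
  have hb : z / (z + 1) ≠ 0 := div_ne_zero hz0 hz1
  rw [Complex.cpow_def_of_ne_zero hz1, Complex.cpow_def_of_ne_zero hb,
    Complex.cpow_def_of_ne_zero hz0, ← Complex.exp_add, ← add_mul, log_split z hz]

lemma unit_comp (η : SL2Z →* (V →ₗ[ℂ] V)ˣ) (a b : SL2Z) (x : V) :
    (η a : V →ₗ[ℂ] V) ((η b : V →ₗ[ℂ] V) x) = (η (a * b) : V →ₗ[ℂ] V) x := by
  rw [map_mul]; rfl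

lemma group_rel : Smat * Tmat⁻¹ * (Smat * Tmat⁻¹) = Tmat * Smat := by
  ext i j
  fin_cases i <;> fin_cases j <;>
    simp [Smat, Tmat, Matrix.SpecialLinearGroup.coe_mul, Matrix.mul_apply, Fin.sum_univ_succ,
      Matrix.SpecialLinearGroup.SL2_inv_expl, Matrix.vecMul, dotProduct,
      Matrix.vecHead, Matrix.vecTail] <;> decide

lemma lewis_step (η : SL2Z →* (V →ₗ[ℂ] V)ˣ) (ν : ℂ) (ψ : ℂ → V)
    (hψlewis : ∀ z ∈ Complex.slitPlane,
      (η Tmat : V →ₗ[ℂ] V) (ψ z) =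
        ψ (z + 1) + ((z + 1) ^ (-2 * ν - 1)) •
          (η (Smat * Tmat⁻¹) : V →ₗ[ℂ] V) (ψ (z / (z + 1))))
    (z : ℂ) (hz : z.im ≠ 0) :
    lewisCombo ν η ψ (z + 1) = (η Tmat : V →ₗ[ℂ] V) (lewisCombo ν η ψ z) := by
  set s : ℂ := -2 * ν - 1 with hs
  have hz0 : z ≠ 0 := fun h => hz (by simp [h])
  have hz1 : z + 1 ≠ 0 := fun h => hz (by simpa using congrArg Complex.im h)
  have hnsq : 0 < Complex.normSq (z + 1) := Complex.normSq_pos.mpr hz1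
  set w : ℂ := -(z + 1)⁻¹ with hw
  have hwim : w.im ≠ 0 := by
    rw [hw]
    simp only [Complex.neg_im, Complex.inv_im, neg_div, neg_neg]
    have : (z + 1).im = z.im := by simp
    rw [this]
    exact div_ne_zero hz (ne_of_gt hnsq)
  have hw1 : w + 1 = z / (z + 1) := by rw [hw]; field_simp; ring
  have hw2 : w / (w + 1) = -z⁻¹ := by
    rw [hw1, hw]; field_simp
  have hzslit : z ∈ Complex.slitPlane := Complex.mem_slitPlane_iff.mpr (Or.inr hz)
  have hwslit : w ∈ Complex.slitPlane := Complex.mem_slitPlane_iff.mpr (Or.inr hwim)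
  have lw := hψlewis w hwslit
  rw [hw2, hw1] at lw
  have hψw : ψ w = (η Tmat⁻¹ : V →ₗ[ℂ] V)
      (ψ (z / (z + 1)) + ((z / (z + 1)) ^ s) •
        (η (Smat * Tmat⁻¹) : V →ₗ[ℂ] V) (ψ (-z⁻¹))) := by
    rw [← lw, unit_comp, inv_mul_cancel, map_one, Units.val_one, Module.End.one_apply]
  have lz := hψlewis z hzslit
  show ψ (z + 1) + ((z + 1) ^ s) • (η Smat : V →ₗ[ℂ] V) (ψ (-(z + 1)⁻¹)) =
    (η Tmat : V →ₗ[ℂ] V) (ψ z + (z ^ s) • (η Smat : V →ₗ[ℂ] V) (ψ (-z⁻¹)))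
  rw [← hw, hψw]
  simp only [map_add, _root_.map_smul, unit_comp]
  rw [lz]
  have hgrp : Smat * (Tmat⁻¹ * (Smat * Tmat⁻¹)) = Tmat * Smat := by
    rw [← mul_assoc, group_rel]
  rw [hgrp, smul_add, smul_smul, cpow_split z hz s, ← add_assoc]

lemma isCompact_box (a b c d : ℝ) :
    IsCompact {w : ℂ | w.re ∈ Set.Icc a b ∧ w.im ∈ Set.Icc c d} := by
  have h := ((isCompact_Icc (a := a) (b := b)).prod (isCompact_Icc (a := c) (b := d))).image
    (show Continuous (fun p : ℝ × ℝ => (p.1 : ℂ) + p.2 * I) by continuity)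
  convert h using 1
  ext w
  simp only [Set.mem_image, Set.mem_setOf_eq, Set.mem_prod, Prod.exists]
  constructor
  · rintro ⟨h1, h2⟩; exact ⟨w.re, w.im, ⟨h1, h2⟩, by simp [Complex.re_add_im]⟩
  · rintro ⟨x, y, ⟨h1, h2⟩, rfl⟩; constructor <;> simp [h1, h2]

/-- **Bruggeman transform, converse direction** (part of Proposition 2.3 of the paper):
if `ν ∉ ½+ℤ` and `ψ` is holomorphic on the slit plane and satisfies the Lewis equation,
then `f` defined by the inversion formula is holomorphic on `ℂ∖ℝ`, satisfies
`f(z+1) = η(T) f(z)`, and if `ψ` in addition satisfies the limit condition then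
`f ∈ F_η`. -/
theorem bruggeman_converse [FiniteDimensional ℂ V] [Nontrivial V]
    (η : SL2Z →* (V →ₗ[ℂ] V)ˣ) (hη1 : η negI = 1) (hηfin : (Set.range η).Finite)
    (ν : ℂ) (hν : ∀ n : ℤ, ν ≠ 1 / 2 + n)
    (ψ : ℂ → V) (hψholo : DifferentiableOn ℂ ψ Complex.slitPlane)
    (hψlewis : ∀ z ∈ Complex.slitPlane,
      (η Tmat : V →ₗ[ℂ] V) (ψ z) =
        ψ (z + 1) + ((z + 1) ^ (-2 * ν - 1)) •
          (η (Smat * Tmat⁻¹) : V →ₗ[ℂ] V) (ψ (z / (z + 1))))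
    (f : ℂ → V)
    (hfup : ∀ z : ℂ, 0 < z.im →
      f z = (1 + Complex.exp (-(2 * Real.pi * I * ν)))⁻¹ • lewisCombo ν η ψ z)
    (hfdown : ∀ z : ℂ, z.im < 0 →
      f z = (1 + Complex.exp (2 * Real.pi * I * ν))⁻¹ • lewisCombo ν η ψ z) :
    DifferentiableOn ℂ f {z : ℂ | z.im ≠ 0} ∧
    (∀ z : ℂ, z.im ≠ 0 → f (z + 1) = (η Tmat : V →ₗ[ℂ] V) (f z)) ∧
    ((∃ Lp Lm : V,
        Tendsto (lewisCombo ν η ψ) (comap Complex.im atTop) (𝓝 Lp) ∧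
        Tendsto (lewisCombo ν η ψ) (comap Complex.im atBot) (𝓝 Lm) ∧
        Complex.exp (Real.pi * I * ν) • Lp + Complex.exp (-(Real.pi * I * ν)) • Lm = 0) →
      MemFeta η f) := by
  set g : ℂ → V := lewisCombo ν η ψ with hg
  have hstep : ∀ z : ℂ, z.im ≠ 0 → g (z + 1) = (η Tmat : V →ₗ[ℂ] V) (g z) :=
    fun z hz => lewis_step η ν ψ hψlewis z hz
  -- differentiability of g
  have hgdiff : ∀ z : ℂ, z.im ≠ 0 → DifferentiableAt ℂ g z := by
    intro z hz
    have hz0 : z ≠ 0 := fun h => hz (by simp [h])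
    have hzs : z ∈ Complex.slitPlane := Complex.mem_slitPlane_iff.mpr (Or.inr hz)
    have hinv : (-z⁻¹).im ≠ 0 := by
      simp only [Complex.neg_im, Complex.inv_im, neg_div, neg_neg]
      exact div_ne_zero hz (Complex.normSq_pos.mpr hz0).ne'
    have hinvs : -z⁻¹ ∈ Complex.slitPlane := Complex.mem_slitPlane_iff.mpr (Or.inr hinv)
    have h1 : DifferentiableAt ℂ ψ z :=
      hψholo.differentiableAt (Complex.isOpen_slitPlane.mem_nhds hzs)
    have h2 : DifferentiableAt ℂ (fun w : ℂ => w ^ (-2 * ν - 1)) z :=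
      differentiableAt_id.cpow (differentiableAt_const _) hzs
    have h3 : DifferentiableAt ℂ (fun w : ℂ => ψ (-w⁻¹)) z := by
      have hi : DifferentiableAt ℂ (fun w : ℂ => -w⁻¹) z := (differentiableAt_inv hz0).neg
      exact (hψholo.differentiableAt (Complex.isOpen_slitPlane.mem_nhds hinvs)).comp z hi
    have h4 : DifferentiableAt ℂ (fun w : ℂ => (η Smat : V →ₗ[ℂ] V) (ψ (-w⁻¹))) z := by
      have := ((LinearMap.toContinuousLinearMap
        (η Smat : V →ₗ[ℂ] V)).differentiable.differentiableAt).comp z h3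
      exact this
    exact h1.add (h2.smul h4)
  have hopenU : IsOpen {z : ℂ | 0 < z.im} := isOpen_lt continuous_const Complex.continuous_im
  have hopenL : IsOpen {z : ℂ | z.im < 0} := isOpen_lt Complex.continuous_im continuous_const
  have hfdiffAt : ∀ z : ℂ, z.im ≠ 0 → DifferentiableAt ℂ f z := by
    intro z hz
    rcases hz.lt_or_gt with hneg | hpos
    · have hev : f =ᶠ[𝓝 z]
          fun w => (1 + Complex.exp (2 * Real.pi * I * ν))⁻¹ • g w := by
        filter_upwards [hopenL.mem_nhds hneg] with w hw
        exact hfdown w hw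
      exact ((hgdiff z hz).const_smul _).congr_of_eventuallyEq hev
    · have hev : f =ᶠ[𝓝 z]
          fun w => (1 + Complex.exp (-(2 * Real.pi * I * ν)))⁻¹ • g w := by
        filter_upwards [hopenU.mem_nhds hpos] with w hw
        exact hfup w hw
      exact ((hgdiff z hz).const_smul _).congr_of_eventuallyEq hev
  have hdiff : DifferentiableOn ℂ f {z : ℂ | z.im ≠ 0} :=
    fun z hz => (hfdiffAt z hz).differentiableWithinAt
  have hper : ∀ z : ℂ, z.im ≠ 0 → f (z + 1) = (η Tmat : V →ₗ[ℂ] V) (f z) := by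
    intro z hz
    have hz1 : (z + 1).im = z.im := by simp
    rcases hz.lt_or_gt with hneg | hpos
    · rw [hfdown z hneg, hfdown (z + 1) (by rw [hz1]; exact hneg), hstep z hz]
      exact (LinearMap.map_smul _ _ _).symm
    · rw [hfup z hpos, hfup (z + 1) (by rw [hz1]; exact hpos), hstep z hz]
      exact (LinearMap.map_smul _ _ _).symm
  refine ⟨hdiff, hper, ?_⟩
  rintro ⟨Lp, Lm, hLp, hLm, hrel⟩
  have hne1 : 1 + Complex.exp (2 * Real.pi * I * ν) ≠ 0 := one_add_exp_ne_pos ν hν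
  have hne2 : 1 + Complex.exp (-(2 * Real.pi * I * ν)) ≠ 0 := one_add_exp_ne_neg ν hν
  set cp : ℂ := (1 + Complex.exp (-(2 * Real.pi * I * ν)))⁻¹ with hcp
  set cm : ℂ := (1 + Complex.exp (2 * Real.pi * I * ν))⁻¹ with hcm
  -- integer periodicity
  have hperZ : ∀ n : ℤ, ∀ z : ℂ, z.im ≠ 0 →
      f (z + n) = (η (Tmat ^ n) : V →ₗ[ℂ] V) (f z) := by
    intro n
    induction n using Int.induction_on with
    | zero => intro z hz; simp
    | succ k ih =>
      intro z hz
      have e1 : z + ((k : ℤ) + 1 : ℤ) = (z + (k : ℤ)) + 1 := by push_cast; ring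
      have him : (z + ((k : ℤ) : ℂ)).im = z.im := by simp
      rw [e1, hper _ (by rw [him]; exact hz), ih z hz, unit_comp]
      congr 2
      rw [← zpow_one_add]
      congr 1
      ring
    | pred k ih =>
      intro z hz
      have him : (z + ((-(k : ℤ) - 1 : ℤ) : ℂ)).im = z.im := by simp
      have h2 := hper (z + ((-(k : ℤ) - 1 : ℤ) : ℂ)) (by rw [him]; exact hz)
      have e1 : z + ((-(k : ℤ) - 1 : ℤ) : ℂ) + 1 = z + ((-(k : ℤ) : ℤ) : ℂ) := by
        push_cast; ring
      rw [e1, ih z hz] at h2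
      have h3 := congrArg (fun v => (η Tmat⁻¹ : V →ₗ[ℂ] V) v) h2
      simp only [unit_comp] at h3
      have e2 : Tmat⁻¹ * Tmat ^ (-(k : ℤ)) = Tmat ^ (-(k : ℤ) - 1) := by
        rw [← zpow_neg_one, ← zpow_add]
        congr 1
        ring
      have e3 : Tmat⁻¹ * Tmat = 1 := inv_mul_cancel Tmat
      rw [e2, e3] at h3
      simp only [map_one, Units.val_one, Module.End.one_apply] at h3
      exact h3.symm
  -- operator norm bound
  obtain ⟨C0, hC0nn, hC0⟩ : ∃ C0 : ℝ, 0 ≤ C0 ∧ ∀ γ : SL2Z,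
      ‖LinearMap.toContinuousLinearMap (η γ : V →ₗ[ℂ] V)‖ ≤ C0 := by
    have hfin : ((fun u : (V →ₗ[ℂ] V)ˣ =>
        ‖LinearMap.toContinuousLinearMap (u : V →ₗ[ℂ] V)‖) '' Set.range η).Finite :=
      hηfin.image _
    obtain ⟨C, hC⟩ := hfin.bddAbove
    refine ⟨max C 0, le_max_right _ _, fun γ => ?_⟩
    exact le_trans (hC ⟨η γ, Set.mem_range_self γ, rfl⟩) (le_max_left _ _)
  have hnorm : ∀ (γ : SL2Z) (v : V), ‖(η γ : V →ₗ[ℂ] V) v‖ ≤ C0 * ‖v‖ := by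
    intro γ v
    have h1 := (LinearMap.toContinuousLinearMap (η γ : V →ₗ[ℂ] V)).le_opNorm v
    have h2 := mul_le_mul_of_nonneg_right (hC0 γ) (norm_nonneg v)
    simpa using h1.trans h2
  -- tail bounds
  obtain ⟨Mp, hMp⟩ : ∃ M : ℝ, ∀ z : ℂ, M ≤ z.im → ‖g z - Lp‖ ≤ 1 := by
    have h1 : {z : ℂ | ‖g z - Lp‖ ≤ 1} ∈ comap Complex.im atTop := by
      refine Filter.mem_of_superset (hLp (Metric.closedBall_mem_nhds Lp one_pos)) ?_
      intro z hz
      simpa [dist_eq_norm] using hz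
    obtain ⟨t, ht, hsub⟩ := Filter.mem_comap.mp h1
    obtain ⟨M, hM⟩ := Filter.mem_atTop_sets.mp ht
    exact ⟨M, fun z hz => hsub (hM _ hz)⟩
  obtain ⟨Mm, hMm⟩ : ∃ M : ℝ, ∀ z : ℂ, z.im ≤ M → ‖g z - Lm‖ ≤ 1 := by
    have h1 : {z : ℂ | ‖g z - Lm‖ ≤ 1} ∈ comap Complex.im atBot := by
      refine Filter.mem_of_superset (hLm (Metric.closedBall_mem_nhds Lm one_pos)) ?_
      intro z hz
      simpa [dist_eq_norm] using hz
    obtain ⟨t, ht, hsub⟩ := Filter.mem_comap.mp h1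
    obtain ⟨M, hM⟩ := Filter.mem_atBot_sets.mp ht
    exact ⟨M, fun z hz => hsub (hM _ hz)⟩
  set Mp' : ℝ := max Mp 1 with hMp'
  set Mm' : ℝ := min Mm (-1) with hMm'
  -- compact box bounds
  obtain ⟨C1, hC1⟩ : ∃ C1 : ℝ, ∀ w : ℂ,
      w.re ∈ Set.Icc (0:ℝ) 1 → w.im ∈ Set.Icc (1:ℝ) Mp' → ‖f w‖ ≤ C1 := by
    have hsub1 : {w : ℂ | w.re ∈ Set.Icc (0:ℝ) 1 ∧ w.im ∈ Set.Icc (1:ℝ) Mp'} ⊆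
        {z : ℂ | z.im ≠ 0} := by
      rintro w ⟨-, hw2⟩
      have : (1:ℝ) ≤ w.im := hw2.1
      intro h
      rw [h] at this
      linarith
    obtain ⟨C, hC⟩ := (isCompact_box 0 1 1 Mp').exists_bound_of_continuousOn
      ((hdiff.continuousOn).mono hsub1)
    exact ⟨C, fun w h1 h2 => hC w ⟨h1, h2⟩⟩
  obtain ⟨C2, hC2⟩ : ∃ C2 : ℝ, ∀ w : ℂ,
      w.re ∈ Set.Icc (0:ℝ) 1 → w.im ∈ Set.Icc Mm' (-1:ℝ) → ‖f w‖ ≤ C2 := by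
    have hsub1 : {w : ℂ | w.re ∈ Set.Icc (0:ℝ) 1 ∧ w.im ∈ Set.Icc Mm' (-1:ℝ)} ⊆
        {z : ℂ | z.im ≠ 0} := by
      rintro w ⟨-, hw2⟩
      have : w.im ≤ -1 := hw2.2
      intro h
      rw [h] at this
      linarith
    obtain ⟨C, hC⟩ := (isCompact_box 0 1 Mm' (-1)).exists_bound_of_continuousOn
      ((hdiff.continuousOn).mono hsub1)
    exact ⟨C, fun w h1 h2 => hC w ⟨h1, h2⟩⟩
  -- tail bounds for f
  have hB3 : ∀ w : ℂ, Mp' ≤ w.im → ‖f w‖ ≤ ‖cp‖ * (‖Lp‖ + 1) := by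
    intro w hw
    have hpos : 0 < w.im := lt_of_lt_of_le (by linarith [le_max_right Mp (1:ℝ)] : (0:ℝ) < Mp') hw
    rw [hfup w hpos, norm_smul]
    have hgw : ‖g w‖ ≤ ‖Lp‖ + 1 := by
      have h1 := hMp w (le_trans (le_max_left Mp 1) hw)
      have h2 := norm_sub_norm_le (g w) Lp
      linarith
    exact mul_le_mul_of_nonneg_left hgw (norm_nonneg cp)
  have hB4 : ∀ w : ℂ, w.im ≤ Mm' → ‖f w‖ ≤ ‖cm‖ * (‖Lm‖ + 1) := by
    intro w hw
    have hneg : w.im < 0 := lt_of_le_of_lt hw (by linarith [min_le_right Mm (-1:ℝ)] : Mm' < 0)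
    rw [hfdown w hneg, norm_smul]
    have hgw : ‖g w‖ ≤ ‖Lm‖ + 1 := by
      have h1 := hMm w (le_trans hw (min_le_left Mm (-1)))
      have h2 := norm_sub_norm_le (g w) Lm
      linarith
    exact mul_le_mul_of_nonneg_left hgw (norm_nonneg cm)
  set D : ℝ := max (max C1 C2) (max (‖cp‖ * (‖Lp‖ + 1)) (‖cm‖ * (‖Lm‖ + 1))) with hD
  have hstripe : ∀ w : ℂ, w.re ∈ Set.Icc (0:ℝ) 1 → 1 ≤ |w.im| → ‖f w‖ ≤ D := by
    intro w hre him
    rcases le_or_gt 1 w.im with h1 | h1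
    · rcases le_or_gt w.im Mp' with h2 | h2
      · exact le_trans (hC1 w hre ⟨h1, h2⟩) (le_trans (le_max_left _ _) (le_max_left _ _))
      · exact le_trans (hB3 w h2.le)
          (le_trans (le_max_left _ _) (le_max_right _ _))
    · have h1' : w.im ≤ -1 := by
        rcases abs_cases w.im with ⟨he, hs2⟩ | ⟨he, hs2⟩ <;> linarith
      rcases le_or_gt Mm' w.im with h2 | h2
      · exact le_trans (hC2 w hre ⟨h2, h1'⟩) (le_trans (le_max_right _ _) (le_max_left _ _))
      · exact le_trans (hB4 w h2.le)
          (le_trans (le_max_right _ _) (le_max_right _ _))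
  have hbounded : ∃ C : ℝ, ∀ z : ℂ, 1 ≤ |z.im| → ‖f z‖ ≤ C := by
    refine ⟨C0 * D, fun z hz => ?_⟩
    have hzim : z.im ≠ 0 := by
      intro h
      rw [h] at hz
      simp at hz
      linarith
    set n : ℤ := ⌊z.re⌋ with hn
    set w : ℂ := z - (n : ℂ) with hwdef
    have hwim : w.im = z.im := by simp [hwdef]
    have hwz : w + (n : ℂ) = z := by ring
    have hfz : f z = (η (Tmat ^ n) : V →ₗ[ℂ] V) (f w) := by
      have := hperZ n w (by rw [hwim]; exact hzim)
      rwa [hwz] at this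
    have hre : w.re ∈ Set.Icc (0:ℝ) 1 := by
      constructor
      · simp only [hwdef, Complex.sub_re, Complex.intCast_re]
        exact sub_nonneg.mpr (Int.floor_le z.re)
      · simp only [hwdef, Complex.sub_re, Complex.intCast_re]
        have := Int.lt_floor_add_one z.re
        linarith
    have h1 : ‖f w‖ ≤ D := hstripe w hre (by rw [hwim]; exact hz)
    rw [hfz]
    exact le_trans (hnorm (Tmat ^ n) (f w)) (mul_le_mul_of_nonneg_left h1 hC0nn)
  -- the limits
  have hLmLp : Lm = -(Complex.exp (2 * Real.pi * I * ν) • Lp) := by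
    have h3 : Complex.exp (Real.pi * I * ν) •
        (Complex.exp (Real.pi * I * ν) • Lp + Complex.exp (-(Real.pi * I * ν)) • Lm) =
        (0 : V) := by rw [hrel, smul_zero]
    rw [smul_add, smul_smul, smul_smul, ← Complex.exp_add, ← Complex.exp_add] at h3
    rw [show (Real.pi : ℂ) * I * ν + Real.pi * I * ν = 2 * Real.pi * I * ν by ring,
      show (Real.pi : ℂ) * I * ν + -(Real.pi * I * ν) = 0 by ring,
      Complex.exp_zero, one_smul] at h3
    exact eq_neg_of_add_eq_zero_right h3
  have hscalar : cp = cm * Complex.exp (2 * Real.pi * I * ν) := by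
    rw [hcp, hcm]
    have key : Complex.exp (-(2 * Real.pi * I * ν)) * Complex.exp (2 * Real.pi * I * ν)
        = 1 := by
      rw [← Complex.exp_add, show -(2 * (Real.pi:ℂ) * I * ν) + 2 * Real.pi * I * ν = 0 by ring,
        Complex.exp_zero]
    field_simp
    linear_combination -key
  have habsum : cp • Lp + cm • Lm = 0 := by
    rw [hLmLp, smul_neg, smul_smul, ← sub_eq_add_neg, ← sub_smul,
      show cp - cm * Complex.exp (2 * Real.pi * I * ν) = 0 by rw [hscalar]; ring, zero_smul]
  have htop : Tendsto (fun t : ℝ => f ((t : ℂ) * I)) atTop (𝓝 (cp • Lp)) := by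
    have hcomap : Tendsto (fun t : ℝ => (t : ℂ) * I) atTop (comap Complex.im atTop) := by
      rw [tendsto_comap_iff]
      have : (Complex.im ∘ fun t : ℝ => (t : ℂ) * I) = id := by funext t; simp
      rw [this]; exact tendsto_id
    have h1 : Tendsto (fun t : ℝ => g ((t : ℂ) * I)) atTop (𝓝 Lp) := hLp.comp hcomap
    have h2 := h1.const_smul cp
    refine h2.congr' ?_
    filter_upwards [eventually_gt_atTop (0:ℝ)] with t ht
    rw [hfup ((t : ℂ) * I) (by simpa using ht)]
  have hbot : Tendsto (fun t : ℝ => f (-((t : ℂ) * I))) atTop (𝓝 (cm • Lm)) := by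
    have hcomap : Tendsto (fun t : ℝ => -((t : ℂ) * I)) atTop (comap Complex.im atBot) := by
      rw [tendsto_comap_iff]
      have : (Complex.im ∘ fun t : ℝ => -((t : ℂ) * I)) = fun t => -t := by funext t; simp
      rw [this]; exact tendsto_neg_atTop_atBot
    have h1 : Tendsto (fun t : ℝ => g (-((t : ℂ) * I))) atTop (𝓝 Lm) := hLm.comp hcomap
    have h2 := h1.const_smul cm
    refine h2.congr' ?_
    filter_upwards [eventually_gt_atTop (0:ℝ)] with t ht
    rw [hfdown (-((t : ℂ) * I)) (by simpa using ht)]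
  exact ⟨hdiff, hper, hbounded, ⟨cp • Lp, cm • Lm, htop, hbot, habsum⟩⟩

end
end

section
/- Mellin transform of the boundary Fourier series. Let ν ∈ ℂ, let N ≥ 1 be an integer, and let (v_k)_{k∈ℤ∖{0}} be a bounded family of vectors in V (a finite-dimensional complex normed space). Define f : ℂ∖ℝ → V by f(z) = Σ_{k>0} k^ν e^{2πikz/N} v_k for Im z > 0 and f(z) = -Σ_{k<0} |k|^ν e^{2πikz/N} v_k for Im z < 0 (these series converge absolutely and locally uniformly). Then for ε ∈ {0,1} and every s ∈ ℂ with Re s > max(0, Re ν + 1): ∫₀^∞ y^{s-1} ( f(iy) - (-1)^ε f(-iy) ) dy = Γ(s) N^ν (2π)^{-s} Σ_{k≠0} sgn(k)^ε (N/|k|)^{s-ν} v_k, where the integral and the Dirichlet series converge absolutely. -/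
open Complex Filter Topology MeasureTheory Set
open scoped ENNReal NNReal

noncomputable section

lemma my_integrable_tsum {α : Type*} [MeasurableSpace α] {μ : Measure α}
    {E : Type*} [NormedAddCommGroup E] [CompleteSpace E]
    {ι : Type*} [Countable ι] {F : ι → α → E}
    (hF_int : ∀ i : ι, Integrable (F i) μ)
    (hF_sum : Summable fun i ↦ ∫ a, ‖F i a‖ ∂μ) :
    Integrable (fun a ↦ ∑' i, F i a) μ := by
  have hf'' : ∀ i, AEMeasurable (fun x ↦ ((‖F i x‖₊ : NNReal) : ENNReal)) μ := fun i ↦ (hF_int i).1.nnnorm.aemeasurable.coe_nnreal_ennreal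
  have hf' : ∑' i, ∫⁻ a, ‖F i a‖₊ ∂μ ≠ ⊤ := by
    have h1 : ∀ i : ι, ∫⁻ (a : α), ‖F i a‖₊ ∂μ = ‖(∫ a : α, ‖F i a‖ ∂μ)‖₊ := by
      intro i
      rw [lintegral_coe_eq_integral _ (hF_int i).norm, ENNReal.coe_nnreal_eq, coe_nnnorm,
        Real.norm_of_nonneg (integral_nonneg (fun a ↦ norm_nonneg (F i a)))]
      simp only [coe_nnnorm]
    rw [funext h1, ← ENNReal.coe_tsum]
    · exact ENNReal.coe_ne_top
    · simp_rw [← NNReal.summable_coe, coe_nnnorm]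
      exact hF_sum.abs
  have hhh : ∀ᵐ a ∂μ, Summable fun n ↦ (‖F n a‖₊ : ℝ) := by
    rw [← lintegral_tsum hf''] at hf'
    refine (ae_lt_top' (AEMeasurable.ennreal_tsum hf'') hf').mono fun x hx ↦ ?_
    rw [← ENNReal.tsum_coe_ne_top_iff_summable_coe]
    exact hx.ne
  constructor
  · refine aestronglyMeasurable_of_tendsto_ae (atTop : Filter (Finset ι))
      (fun s ↦ s.aestronglyMeasurable_sum fun i _ ↦ (hF_int i).1) ?_
    filter_upwards [hhh] with x hx
    have : Summable fun i ↦ ‖F i x‖ := by simpa only [coe_nnnorm] using hx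
    have h := this.of_norm.hasSum
    simp only [Finset.sum_apply]
    exact h
  · rw [HasFiniteIntegral]
    calc ∫⁻ a, ‖∑' i, F i a‖₊ ∂μ ≤ ∫⁻ a, ∑' i, (‖F i a‖₊ : ℝ≥0∞) ∂μ := by
          refine lintegral_mono fun a ↦ ?_
          by_cases h : Summable fun i ↦ ‖F i a‖₊
          · calc (‖∑' i, F i a‖₊ : ℝ≥0∞) ≤ ((∑' i, ‖F i a‖₊ : ℝ≥0) : ℝ≥0∞) :=
                  ENNReal.coe_le_coe.2 (nnnorm_tsum_le h)
              _ = ∑' i, (‖F i a‖₊ : ℝ≥0∞) := ENNReal.coe_tsum h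
          · have h2 : ∑' i, (‖F i a‖₊ : ℝ≥0∞) = ⊤ := by
              by_contra hc
              exact h (ENNReal.tsum_coe_ne_top_iff_summable.mp hc)
            rw [h2]; exact le_top
      _ = ∑' i, ∫⁻ a, ‖F i a‖₊ ∂μ := lintegral_tsum hf''
      _ < ⊤ := hf'.lt_top

lemma my_hasSum_mellin {V : Type*} [NormedAddCommGroup V] [NormedSpace ℂ V] [CompleteSpace V]
    {ι : Type*} [Countable ι] {a : ι → ℂ} {w : ι → V} {p : ι → ℝ} {F : ℝ → V} {s : ℂ}
    (hp : ∀ i, 0 < p i) (hs : 0 < s.re)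
    (hF : ∀ t ∈ Ioi (0:ℝ), HasSum (fun i ↦ (a i * Real.exp (-p i * t)) • w i) (F t))
    (h_sum : Summable fun i ↦ ‖a i‖ * ‖w i‖ / (p i) ^ s.re) :
    HasSum (fun i ↦ (Complex.Gamma s * a i / (p i : ℂ) ^ s) • w i)
        (∫ t in Ioi (0:ℝ), (t : ℂ) ^ (s - 1) • F t) ∧
      IntegrableOn (fun t : ℝ ↦ (t : ℂ) ^ (s - 1) • F t) (Ioi 0) := by
  set G : ι → ℝ → V := fun i t ↦ ((t : ℂ) ^ (s - 1) * (a i * Real.exp (-p i * t))) • w i with hG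
  have φ_int : ∀ i, IntegrableOn
      (fun t : ℝ ↦ (t : ℂ) ^ (s - 1) * (a i * Real.exp (-p i * t))) (Ioi 0) := by
    intro i
    simp_rw [← mul_assoc, mul_comm _ (a i), mul_assoc]
    have := Complex.GammaIntegral_convergent hs
    rw [← mul_zero (p i), ← integrableOn_Ioi_comp_mul_left_iff _ _ (hp i)] at this
    refine (IntegrableOn.congr_fun (this.const_mul (1 / (p i : ℂ) ^ (s - 1)))
      (fun t (ht : 0 < t) ↦ ?_) measurableSet_Ioi).const_mul _
    simp_rw [mul_comm (↑(Real.exp _) : ℂ), ← mul_assoc, neg_mul, Complex.ofReal_mul]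
    rw [mul_cpow_ofReal_nonneg (hp i).le ht.le, ← mul_assoc, one_div, inv_mul_cancel₀, one_mul]
    rw [Ne, cpow_eq_zero_iff, not_and_or]
    exact Or.inl (ofReal_ne_zero.mpr (hp i).ne')
  have G_int : ∀ i, Integrable (G i) (volume.restrict (Ioi 0)) :=
    fun i ↦ ((φ_int i).smul_const (w i) : _)
  have φ_val : ∀ i, (∫ t in Ioi (0:ℝ), (t : ℂ) ^ (s - 1) * (a i * Real.exp (-p i * t)))
      = Complex.Gamma s * a i / (p i : ℂ) ^ s := by
    intro i
    have h1 : ∀ t : ℝ, (t : ℂ) ^ (s - 1) * (a i * Real.exp (-p i * t))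
        = a i * ((t : ℂ) ^ (s - 1) * Complex.exp (-((p i : ℂ) * t))) := by
      intro t
      rw [Complex.ofReal_exp]
      push_cast
      ring
    simp_rw [h1]
    rw [MeasureTheory.integral_const_mul, integral_cpow_mul_exp_neg_mul_Ioi hs (hp i),
      one_div, inv_cpow _ _ (by rw [arg_ofReal_of_nonneg (hp i).le]; exact Real.pi_ne_zero.symm),
      div_eq_mul_inv]
    ring
  have φ_norm : ∀ i, (∫ t in Ioi (0:ℝ), ‖G i t‖)
      = Real.Gamma s.re * (‖a i‖ * ‖w i‖ / (p i) ^ s.re) := by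
    intro i
    have h1 : ∀ t ∈ Ioi (0:ℝ), ‖G i t‖
        = (‖a i‖ * ‖w i‖) * (t ^ (s.re - 1) * Real.exp (-(p i * t))) := by
      intro t ht
      rw [hG]
      simp only [norm_smul, norm_mul]
      rw [norm_cpow_eq_rpow_re_of_pos ht, sub_re, one_re,
        Complex.norm_real, Real.norm_eq_abs, abs_of_pos (Real.exp_pos _), neg_mul]
      ring
    rw [setIntegral_congr_fun measurableSet_Ioi h1, MeasureTheory.integral_const_mul,
      Real.integral_rpow_mul_exp_neg_mul_Ioi hs (hp i), one_div,
      Real.inv_rpow (hp i).le, div_eq_mul_inv]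
    ring
  have sum_norm : Summable fun i ↦ ∫ t in Ioi (0:ℝ), ‖G i t‖ := by
    simp_rw [φ_norm]
    exact h_sum.mul_left _
  have key := hasSum_integral_of_summable_integral_norm G_int sum_norm
  have eqset : ∀ t ∈ Ioi (0:ℝ), (∑' i, G i t) = (t : ℂ) ^ (s - 1) • F t := by
    intro t ht
    have h2 := (hF t ht).const_smul ((t : ℂ) ^ (s - 1))
    simp_rw [smul_smul] at h2
    exact h2.tsum_eq
  constructor
  · have : (∫ t in Ioi (0:ℝ), ∑' i, G i t) = ∫ t in Ioi (0:ℝ), (t : ℂ) ^ (s - 1) • F t :=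
      setIntegral_congr_fun measurableSet_Ioi eqset
    rw [this] at key
    convert key using 2 with i
    rw [show (fun t : ℝ ↦ G i t) = fun t : ℝ ↦ ((t : ℂ) ^ (s - 1) * (a i * Real.exp (-p i * t))) • w i from rfl]
    rw [integral_smul_const, φ_val i]
  · refine (my_integrable_tsum G_int sum_norm).congr ?_
    filter_upwards [ae_restrict_mem measurableSet_Ioi] with t ht
    exact eqset t ht

lemma key_scalar {A B : ℝ} (hA : 0 < A) (hB : 0 < B) (ν s : ℂ) :
    ((A : ℂ)) ^ ν / ((2 * Real.pi * A / B : ℝ) : ℂ) ^ s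
      = ((B : ℂ)) ^ ν * (2 * (Real.pi : ℂ)) ^ (-s) * (((B / A : ℝ)) : ℂ) ^ (s - ν) := by
  have hπ : (0:ℝ) < 2 * Real.pi := by positivity
  have hAB : (0:ℝ) < A / B := div_pos hA hB
  have hBA : (0:ℝ) < B / A := div_pos hB hA
  have h1 : (2 * Real.pi * A / B : ℝ) = (2 * Real.pi) * (A / B) := by ring
  have h2 : ((A / B : ℝ) : ℂ) = (((B / A : ℝ) : ℂ))⁻¹ := by
    rw [← Complex.ofReal_inv, inv_div]
  have harg : Complex.arg ((B / A : ℝ) : ℂ) ≠ Real.pi := by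
    rw [Complex.arg_ofReal_of_nonneg hBA.le]; exact Real.pi_ne_zero.symm
  have h3 : ((B : ℂ)) ^ ν = ((A : ℂ)) ^ ν * (((B / A : ℝ)) : ℂ) ^ ν := by
    rw [← Complex.mul_cpow_ofReal_nonneg hA.le hBA.le, ← Complex.ofReal_mul,
      show A * (B / A) = B by field_simp]
  have hBA0 : (((B / A : ℝ)) : ℂ) ≠ 0 := Complex.ofReal_ne_zero.mpr hBA.ne'
  have hx : (((B / A : ℝ)) : ℂ) ^ s ≠ 0 := by
    intro h; rw [Complex.cpow_eq_zero_iff] at h; exact hBA0 h.1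
  have hy : (((B / A : ℝ)) : ℂ) ^ ν ≠ 0 := by
    intro h; rw [Complex.cpow_eq_zero_iff] at h; exact hBA0 h.1
  have hz : ((2 * Real.pi : ℝ) : ℂ) ^ s ≠ 0 := by
    intro h; rw [Complex.cpow_eq_zero_iff] at h
    exact Complex.ofReal_ne_zero.mpr hπ.ne' h.1
  rw [h1, Complex.ofReal_mul, Complex.mul_cpow_ofReal_nonneg hπ.le hAB.le, h2,
    Complex.inv_cpow _ _ harg, ← Complex.cpow_neg, h3,
    Complex.cpow_sub _ _ hBA0, Complex.cpow_neg, Complex.cpow_neg]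
  have hcast : (2 * (Real.pi : ℂ)) = ((2 * Real.pi : ℝ) : ℂ) := by push_cast; ring
  rw [hcast]
  field_simp

/-- **Mellin transform of the boundary Fourier series.** Let `(v_k)_{k≠0}` be a bounded
family in a finite-dimensional complex normed space, `f(z) = Σ_{k>0} k^ν e^{2πikz/N} v_k`
on the upper half-plane and `f(z) = -Σ_{k<0} |k|^ν e^{2πikz/N} v_k` on the lower
half-plane. Then for `ε ∈ {0,1}` and `Re s > max(0, Re ν + 1)`,
`∫₀^∞ y^{s-1} (f(iy) - (-1)^ε f(-iy)) dy = Γ(s) N^ν (2π)^{-s} Σ_{k≠0} sgn(k)^ε (N/|k|)^{s-ν} v_k`,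
where the integral and the Dirichlet series converge absolutely. -/
theorem mellin_boundary_fourier_series
    {V : Type} [NormedAddCommGroup V] [NormedSpace ℂ V] [FiniteDimensional ℂ V]
    (ν : ℂ) (N : ℕ) (hN : 1 ≤ N)
    (v : {k : ℤ // k ≠ 0} → V) (hv : ∃ C : ℝ, ∀ k, ‖v k‖ ≤ C)
    (f : ℂ → V)
    (hfup : ∀ z : ℂ, 0 < z.im →
      HasSum (fun k : {k : ℤ // 0 < k} =>
        (((k.1 : ℤ) : ℂ) ^ ν * Complex.exp (2 * Real.pi * I * (k.1 : ℂ) * z / N)) •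
          v ⟨k.1, k.2.ne'⟩) (f z))
    (hfdown : ∀ z : ℂ, z.im < 0 →
      HasSum (fun k : {k : ℤ // k < 0} =>
        (((|k.1| : ℤ) : ℂ) ^ ν * Complex.exp (2 * Real.pi * I * (k.1 : ℂ) * z / N)) •
          v ⟨k.1, k.2.ne⟩) (-(f z)))
    (ε : ℕ) (hε : ε = 0 ∨ ε = 1)
    (s : ℂ) (hs : max 0 (ν.re + 1) < s.re) :
    IntegrableOn (fun y : ℝ =>
      (y : ℂ) ^ (s - 1) • (f ((y : ℂ) * I) - ((-1 : ℂ) ^ ε) • f (-((y : ℂ) * I))))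
      (Set.Ioi (0 : ℝ)) ∧
    Summable (fun k : {k : ℤ // k ≠ 0} =>
      ‖((Int.sign k.1 : ℂ) ^ ε * (((N : ℂ) / ((|k.1| : ℤ) : ℂ)) ^ (s - ν))) • v k‖) ∧
    (∫ y in Set.Ioi (0 : ℝ),
        (y : ℂ) ^ (s - 1) • (f ((y : ℂ) * I) - ((-1 : ℂ) ^ ε) • f (-((y : ℂ) * I)))) =
      (Complex.Gamma s * (N : ℂ) ^ ν * (2 * (Real.pi : ℂ)) ^ (-s)) •
        ∑' k : {k : ℤ // k ≠ 0},
          ((Int.sign k.1 : ℂ) ^ ε * (((N : ℂ) / ((|k.1| : ℤ) : ℂ)) ^ (s - ν))) • v k := by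
  obtain ⟨C, hC⟩ := hv
  have hC0 : 0 ≤ C := le_trans (norm_nonneg _) (hC ⟨1, one_ne_zero⟩)
  have hσ : 0 < s.re := (le_max_left 0 (ν.re + 1)).trans_lt hs
  have hσν : ν.re + 1 < s.re := (le_max_right 0 (ν.re + 1)).trans_lt hs
  have hNR : (0:ℝ) < (N:ℝ) := by exact_mod_cast Nat.lt_of_lt_of_le Nat.zero_lt_one hN
  have hπ := Real.pi_pos
  set K : {k : ℤ // k ≠ 0} → ℝ := fun k => ((|k.1| : ℤ) : ℝ) with hK_def
  have hK : ∀ k, 0 < K k := fun k => by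
    simp only [hK_def]; exact_mod_cast abs_pos.mpr k.2
  have hKabs : ∀ k, |(k.1 : ℝ)| = K k := fun k => by
    simp only [hK_def]; exact (Int.cast_abs (a := k.1)).symm
  set p : {k : ℤ // k ≠ 0} → ℝ := fun k => 2 * Real.pi * K k / N with hp_def
  set a : {k : ℤ // k ≠ 0} → ℂ := fun k => ((|k.1| : ℤ) : ℂ) ^ ν * (Int.sign k.1 : ℂ) ^ ε
    with ha_def
  have hp : ∀ k, 0 < p k := fun k => by
    have := hK k; simp only [hp_def]; positivity
  have hsign : ∀ k : {k : ℤ // k ≠ 0}, ‖(Int.sign k.1 : ℂ) ^ ε‖ = 1 := by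
    intro k
    rcases lt_or_gt_of_ne k.2 with h | h
    · rw [Int.sign_eq_neg_one_of_neg h]; push_cast; simp
    · rw [Int.sign_eq_one_of_pos h]; push_cast; simp
  have hcastK : ∀ k : {k : ℤ // k ≠ 0}, (((|k.1| : ℤ) : ℂ)) = ((K k : ℝ) : ℂ) := fun k => by
    simp only [hK_def]; exact (Complex.ofReal_intCast _).symm
  have hanorm : ∀ k : {k : ℤ // k ≠ 0}, ‖a k‖ = K k ^ ν.re := by
    intro k
    simp only [ha_def]
    simp only [norm_mul, hsign, mul_one]
    rw [hcastK k, Complex.norm_cpow_eq_rpow_re_of_pos (hK k)]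
  have hmaj : Summable (fun k : {k : ℤ // k ≠ 0} => |(k.1 : ℝ)| ^ (-(s.re - ν.re))) := by
    have := Real.summable_abs_int_rpow (by linarith : 1 < s.re - ν.re)
    exact this.subtype _
  have h_sum : Summable fun k : {k : ℤ // k ≠ 0} => ‖a k‖ * ‖v k‖ / (p k) ^ s.re := by
    refine Summable.of_nonneg_of_le (fun k => by positivity) (fun k => ?_)
      ((hmaj.mul_left (C * (2 * Real.pi / N) ^ (-s.re))))
    have hKk := hK k
    have e1 : p k ^ s.re = (2 * Real.pi / N) ^ s.re * K k ^ s.re := by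
      simp only [hp_def]
      rw [show 2 * Real.pi * K k / (N:ℝ) = (2 * Real.pi / N) * K k by ring,
        Real.mul_rpow (by positivity) (by positivity)]
    have eq1 : ‖a k‖ * ‖v k‖ / p k ^ s.re
        = ‖v k‖ * (((2 * Real.pi / N) ^ s.re)⁻¹ * (K k ^ ν.re * (K k ^ s.re)⁻¹)) := by
      rw [hanorm k, e1, div_eq_mul_inv, mul_inv]; ring
    have eq2 : C * (2 * Real.pi / N) ^ (-s.re) * |(k.1 : ℝ)| ^ (-(s.re - ν.re))
        = C * (((2 * Real.pi / N) ^ s.re)⁻¹ * (K k ^ ν.re * (K k ^ s.re)⁻¹)) := by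
      rw [hKabs k, show -(s.re - ν.re) = ν.re - s.re by ring, Real.rpow_sub hKk,
        Real.rpow_neg (by positivity), div_eq_mul_inv]
      ring
    rw [eq1, eq2]
    exact mul_le_mul_of_nonneg_right (hC k) (by positivity)
  -- the boundary Fourier expansion as a single sum over nonzero integers
  have hF : ∀ t ∈ Ioi (0:ℝ), HasSum (fun k : {k : ℤ // k ≠ 0} =>
      (a k * Real.exp (-p k * t)) • v k)
      (f ((t:ℂ) * I) - ((-1 : ℂ) ^ ε) • f (-((t:ℂ) * I))) := by
    intro t ht
    rw [mem_Ioi] at ht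
    set g : {k : ℤ // k ≠ 0} → V := fun k => (a k * Real.exp (-p k * t)) • v k with hg_def
    have hIm1 : (0:ℝ) < ((t:ℂ) * I).im := by simp [ht]
    have hIm2 : (-((t:ℂ) * I)).im < 0 := by simp [ht]
    have h1 := hfup ((t:ℂ) * I) hIm1
    have h2 := (hfdown (-((t:ℂ) * I)) hIm2).const_smul ((-1 : ℂ) ^ ε)
    set S : Set {k : ℤ // k ≠ 0} := {k | 0 < k.1} with hS_def
    let e : {k : ℤ // 0 < k} ≃ S :=
      { toFun := fun k => ⟨⟨k.1, k.2.ne'⟩, k.2⟩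
        invFun := fun k => ⟨k.1.1, k.2⟩
        left_inv := fun k => rfl
        right_inv := fun k => rfl }
    let e' : {k : ℤ // k < 0} ≃ ↥(Sᶜ) :=
      { toFun := fun k => ⟨⟨k.1, k.2.ne⟩, fun h => absurd h (not_lt.mpr k.2.le)⟩
        invFun := fun k => ⟨k.1.1, lt_of_le_of_ne (not_lt.mp k.2) k.1.2⟩
        left_inv := fun k => rfl
        right_inv := fun k => rfl }
    have hS1 : HasSum ((g ∘ ((↑) : S → _))) (f ((t:ℂ) * I)) := by
      have hfun : ((g ∘ ((↑) : S → _)) ∘ e) = fun k : {k : ℤ // 0 < k} =>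
          (((k.1 : ℤ) : ℂ) ^ ν * Complex.exp (2 * Real.pi * I * (k.1 : ℂ) * ((t:ℂ) * I) / N)) •
            v ⟨k.1, k.2.ne'⟩ := by
        funext k
        have hk : 0 < k.1 := k.2
        simp only [Function.comp, hg_def, ha_def, e, Equiv.coe_fn_mk]
        congr 1
        rw [Int.sign_eq_one_of_pos hk, abs_of_pos hk]
        push_cast
        rw [one_pow, mul_one]
        congr 2
        simp only [hp_def, hK_def]
        push_cast [abs_of_pos hk]
        rw [show 2 * (Real.pi:ℂ) * I * (k.1:ℂ) * ((t:ℂ) * I) / (N:ℂ)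
            = 2 * (Real.pi:ℂ) * (k.1:ℂ) * (t:ℂ) / (N:ℂ) * (I * I) by ring, Complex.I_mul_I]
        ring
      have h1' : HasSum ((g ∘ ((↑) : S → _)) ∘ e) (f ((t:ℂ) * I)) := by rw [hfun]; exact h1
      exact e.hasSum_iff.mp h1'
    have hS2 : HasSum ((g ∘ ((↑) : ↥(Sᶜ) → _))) (((-1 : ℂ) ^ ε) • -f (-((t:ℂ) * I))) := by
      have hfun : ((g ∘ ((↑) : ↥(Sᶜ) → _)) ∘ e') = fun k : {k : ℤ // k < 0} =>
          ((-1 : ℂ) ^ ε) • ((((|k.1| : ℤ) : ℂ) ^ ν *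
            Complex.exp (2 * Real.pi * I * (k.1 : ℂ) * (-((t:ℂ) * I)) / N)) •
            v ⟨k.1, k.2.ne⟩) := by
        funext k
        have hk : k.1 < 0 := k.2
        simp only [Function.comp, hg_def, ha_def, e', Equiv.coe_fn_mk, smul_smul]
        congr 1
        rw [Int.sign_eq_neg_one_of_neg hk]
        push_cast
        have hexp : (-((p ⟨k.1, k.2.ne⟩ : ℝ) : ℂ) * (t : ℂ))
            = 2 * (Real.pi : ℂ) * I * (k.1 : ℂ) * (-((t:ℂ) * I)) / (N : ℂ) := by
          simp only [hp_def, hK_def]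
          push_cast [abs_of_neg hk]
          rw [show 2 * (Real.pi:ℂ) * I * (k.1:ℂ) * (-((t:ℂ) * I)) / (N:ℂ)
              = -(2 * (Real.pi:ℂ) * (k.1:ℂ) * (t:ℂ) / (N:ℂ)) * (I * I) by ring, Complex.I_mul_I]
          ring
        rw [hexp]
        ring
      have h2' : HasSum ((g ∘ ((↑) : ↥(Sᶜ) → _)) ∘ e') (((-1 : ℂ) ^ ε) • -f (-((t:ℂ) * I))) := by
        rw [hfun]; exact h2
      exact e'.hasSum_iff.mp h2'
    have hcompl : HasSum g (f ((t:ℂ)*I) + ((-1:ℂ)^ε) • -f (-((t:ℂ)*I))) :=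
      HasSum.add_isCompl isCompl_compl hS1 hS2
    rw [show f ((t:ℂ)*I) - ((-1:ℂ)^ε) • f (-((t:ℂ)*I))
        = f ((t:ℂ)*I) + ((-1:ℂ)^ε) • -f (-((t:ℂ)*I)) by rw [smul_neg, sub_eq_add_neg]]
    exact hcompl
  -- apply the vector-valued Mellin/Dirichlet machinery
  have faux := my_hasSum_mellin (w := v)
    (F := fun y : ℝ => f ((y : ℂ) * I) - ((-1 : ℂ) ^ ε) • f (-((y : ℂ) * I)))
    hp hσ hF h_sum
  -- summability of the Dirichlet series in the statement
  have hbase : ∀ k : {k : ℤ // k ≠ 0},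
      ((N : ℂ) / ((|k.1| : ℤ) : ℂ)) = ((((N:ℝ) / K k : ℝ)) : ℂ) := by
    intro k
    rw [hcastK k]
    push_cast
    ring
  have hsummN : Summable (fun k : {k : ℤ // k ≠ 0} =>
      ‖((Int.sign k.1 : ℂ) ^ ε * (((N : ℂ) / ((|k.1| : ℤ) : ℂ)) ^ (s - ν))) • v k‖) := by
    refine Summable.of_nonneg_of_le (fun k => norm_nonneg _) (fun k => ?_)
      (hmaj.mul_left (C * (N:ℝ) ^ (s.re - ν.re)))
    have hKk := hK k
    have hdiv : (0:ℝ) < (N:ℝ) / K k := div_pos hNR hKk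
    rw [norm_smul, norm_mul, hsign, one_mul, hbase k,
      Complex.norm_cpow_eq_rpow_re_of_pos hdiv, Complex.sub_re,
      Real.div_rpow hNR.le hKk.le, hKabs k]
    rw [Real.rpow_neg (by positivity)]
    calc (N:ℝ) ^ (s.re - ν.re) / K k ^ (s.re - ν.re) * ‖v k‖
        ≤ (N:ℝ) ^ (s.re - ν.re) / K k ^ (s.re - ν.re) * C := by
          gcongr
          exact hC k
      _ = C * (N:ℝ) ^ (s.re - ν.re) * (K k ^ (s.re - ν.re))⁻¹ := by
          rw [div_eq_mul_inv]; ring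
  have hterm_summ : Summable (fun k : {k : ℤ // k ≠ 0} =>
      ((Int.sign k.1 : ℂ) ^ ε * (((N : ℂ) / ((|k.1| : ℤ) : ℂ)) ^ (s - ν))) • v k) :=
    Summable.of_norm hsummN
  refine ⟨faux.2, hsummN, ?_⟩
  rw [← faux.1.tsum_eq,
    ← Summable.tsum_const_smul (Complex.Gamma s * (N : ℂ) ^ ν * (2 * (Real.pi : ℂ)) ^ (-s)) hterm_summ]
  apply tsum_congr
  intro k
  rw [smul_smul]
  congr 1
  have hpk : ((p k : ℝ) : ℂ) = ((2 * Real.pi * K k / (N:ℝ) : ℝ) : ℂ) := by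
    simp only [hp_def]
  calc Complex.Gamma s * a k / (p k : ℂ) ^ s
      = (Complex.Gamma s * (Int.sign k.1 : ℂ) ^ ε) *
        (((K k : ℝ) : ℂ) ^ ν / ((2 * Real.pi * K k / (N:ℝ) : ℝ) : ℂ) ^ s) := by
        simp only [ha_def]
        rw [hcastK k, hpk]
        ring
    _ = (Complex.Gamma s * (Int.sign k.1 : ℂ) ^ ε) *
        (((N:ℝ) : ℂ) ^ ν * (2 * (Real.pi : ℂ)) ^ (-s) * ((((N:ℝ) / K k : ℝ)) : ℂ) ^ (s - ν)) := by
        rw [key_scalar (hK k) hNR ν s]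
    _ = Complex.Gamma s * (N : ℂ) ^ ν * (2 * (Real.pi : ℂ)) ^ (-s) *
        ((Int.sign k.1 : ℂ) ^ ε * (((N : ℂ) / ((|k.1| : ℤ) : ℂ)) ^ (s - ν))) := by
        rw [← hbase k, Complex.ofReal_natCast]
        ring

end
end
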